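/- arXiv:2002.12159 — 7 statements merged into one kernel-verified Lean document; each statement's English description precedes it below -/
import Mathlib

section
/- For every n ≥ 2 and every collection of n distinct nonnegative real numbers v_1, …, v_n, if the values arrive in a uniformly random order and the wait-and-pick algorithm with cutoff m = ⌊n/2⌋ is applied (picking the value at the first prefix-maximum position after position m, and picking value 0 if no such position exists), then the expected value picked is at least (max_i v_i)/4. -/
/-- The value picked by the wait-and-pick algorithm with cutoff `m`: reject the values at the
first `m` positions (0-indexed positions `0, …, m-1`), then pick the value at the first
prefix-maximum position among the remaining positions, picking `0` if none exists. -/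
noncomputable def waitPick (n : ℕ) (v : Fin n → ℝ) (π : Equiv.Perm (Fin n)) (m : ℕ) : ℝ :=
  if h : (Finset.univ.filter (fun t : Fin n =>
      m ≤ (t : ℕ) ∧ ∀ s : Fin n, s < t → v (π s) < v (π t))).Nonempty
  then v (π ((Finset.univ.filter (fun t : Fin n =>
      m ≤ (t : ℕ) ∧ ∀ s : Fin n, s < t → v (π s) < v (π t))).min' h))
  else 0

lemma waitPick_nonneg (n : ℕ) (v : Fin n → ℝ) (hv : ∀ i, 0 ≤ v i)
    (π : Equiv.Perm (Fin n)) (m : ℕ) : 0 ≤ waitPick n v π m := by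
  unfold waitPick
  split
  · exact hv _
  · exact le_refl 0

/-- Correctness: if the second-largest value sits at a position `< m` and the largest value
sits at a position `≥ m`, the algorithm picks the largest value. -/
lemma waitPick_eq_max (n m : ℕ) (v : Fin n → ℝ) (π : Equiv.Perm (Fin n))
    (i₁ i₂ : Fin n)
    (h1 : ∀ j, j ≠ i₁ → v j < v i₁)
    (h2 : ∀ j, j ≠ i₁ → v j ≤ v i₂)
    (a b : Fin n) (ha : π a = i₂) (hb : π b = i₁)
    (ham : (a : ℕ) < m) (hbm : m ≤ (b : ℕ)) :
    waitPick n v π m = v i₁ := by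
  have hab : a ≠ b := by
    intro h; rw [h] at ham; omega
  unfold waitPick
  set F := Finset.univ.filter (fun t : Fin n =>
      m ≤ (t : ℕ) ∧ ∀ s : Fin n, s < t → v (π s) < v (π t)) with hF
  have hbF : b ∈ F := by
    simp only [hF, Finset.mem_filter, Finset.mem_univ, true_and]
    refine ⟨hbm, fun s hs => ?_⟩
    have hs' : π s ≠ i₁ := by
      intro h
      exact absurd (π.injective (h.trans hb.symm)) (ne_of_lt hs)
    rw [hb]; exact h1 _ hs'
  have hne : F.Nonempty := ⟨b, hbF⟩
  rw [dif_pos hne]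
  have htb : F.min' hne ≤ b := F.min'_le b hbF
  have ht := F.min'_mem hne
  have heq : F.min' hne = b := by
    by_contra hne'
    have htlt : F.min' hne < b := lt_of_le_of_ne htb hne'
    simp only [hF, Finset.mem_filter, Finset.mem_univ, true_and] at ht
    have hat : a < F.min' hne := by
      have : (a : ℕ) < ((F.min' hne : Fin n) : ℕ) := lt_of_lt_of_le ham ht.1
      exact this
    have h3 : v (π a) < v (π (F.min' hne)) := ht.2 a hat
    have hπt : π (F.min' hne) ≠ i₁ := by
      intro h; exact hne' (π.injective (h.trans hb.symm))
    have h4 : v (π (F.min' hne)) ≤ v i₂ := h2 _ hπt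
    rw [ha] at h3; linarith
  rw [heq, hb]

/-- All fibers of `π ↦ (π⁻¹ i₂, π⁻¹ i₁)` have the same cardinality. -/
lemma fiber_card_eq (n : ℕ) (i₁ i₂ : Fin n)
    (a b a' b' : Fin n) (hab : a ≠ b) (hab' : a' ≠ b') :
    (Finset.univ.filter (fun π : Equiv.Perm (Fin n) => π a = i₂ ∧ π b = i₁)).card =
    (Finset.univ.filter (fun π : Equiv.Perm (Fin n) => π a' = i₂ ∧ π b' = i₁)).card := by
  set σ₁ := Equiv.swap a' a with hσ₁
  have hb'' : σ₁ b' ≠ a := by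
    intro h
    have : σ₁ a' = a := Equiv.swap_apply_left a' a
    exact hab' (σ₁.injective (this.trans h.symm))
  set σ₂ := Equiv.swap (σ₁ b') b with hσ₂
  set τ : Equiv.Perm (Fin n) := σ₁.trans σ₂ with hτ
  have hτa : τ a' = a := by
    simp only [hτ, Equiv.trans_apply, hσ₁, Equiv.swap_apply_left]
    exact Equiv.swap_apply_of_ne_of_ne hb''.symm hab
  have hτb : τ b' = b := by
    simp only [hτ, Equiv.trans_apply, hσ₂, Equiv.swap_apply_left]
  refine Finset.card_bij' (fun π _ => π * τ) (fun π _ => π * τ⁻¹) ?_ ?_ ?_ ?_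
  · intro π hπ
    simp only [Finset.mem_filter, Finset.mem_univ, true_and] at hπ ⊢
    simp [Equiv.Perm.mul_apply, hτa, hτb, hπ.1, hπ.2]
  · intro π hπ
    simp only [Finset.mem_filter, Finset.mem_univ, true_and] at hπ ⊢
    have h1 : (π * τ⁻¹) a = π a' := by
      have : τ⁻¹ a = a' := by rw [← hτa]; simp
      simp [Equiv.Perm.mul_apply, this]
    have h2 : (π * τ⁻¹) b = π b' := by
      have : τ⁻¹ b = b' := by rw [← hτb]; simp
      simp [Equiv.Perm.mul_apply, this]
    rw [h1, h2]; exact hπ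
  · intro π _; group
  · intro π _; group

lemma card_filter_lt (n m : ℕ) (h : m ≤ n) :
    (Finset.univ.filter (fun a : Fin n => (a : ℕ) < m)).card = m := by
  have himg : (Finset.univ.filter (fun a : Fin n => (a : ℕ) < m)).image Fin.val
      = Finset.range m := by
    ext x
    simp only [Finset.mem_image, Finset.mem_filter, Finset.mem_univ, true_and,
      Finset.mem_range]
    constructor
    · rintro ⟨a, ha, rfl⟩; exact ha
    · intro hx; exact ⟨⟨x, lt_of_lt_of_le hx h⟩, hx, rfl⟩
  have := Finset.card_image_of_injective
    (Finset.univ.filter (fun a : Fin n => (a : ℕ) < m)) (Fin.val_injective)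
  rw [himg, Finset.card_range] at this
  omega

lemma card_filter_ge (n m : ℕ) (h : m ≤ n) :
    (Finset.univ.filter (fun a : Fin n => m ≤ (a : ℕ))).card = n - m := by
  have key := Finset.card_filter_add_card_filter_not
    (s := (Finset.univ : Finset (Fin n))) (p := fun a : Fin n => (a : ℕ) < m)
  simp only [not_lt, Finset.card_univ, Fintype.card_fin] at key
  have := card_filter_lt n m h
  omega

lemma nat_ineq (n : ℕ) (hn : 2 ≤ n) : n * n - n ≤ 4 * ((n / 2) * (n - n / 2)) := by
  rcases Nat.even_or_odd n with ⟨k, hk⟩ | ⟨k, hk⟩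
  · subst hk
    have h1 : (k + k) / 2 = k := by omega
    have h2 : k + k - k = k := by omega
    rw [h1, h2]
    have e1 : (k + k) * (k + k) = 4 * (k * k) := by ring
    omega
  · subst hk
    have h1 : (2 * k + 1) / 2 = k := by omega
    have h2 : 2 * k + 1 - k = k + 1 := by omega
    rw [h1, h2]
    have e1 : (2 * k + 1) * (2 * k + 1) = 4 * (k * k) + 4 * k + 1 := by ring
    have e2 : k * (k + 1) = k * k + k := by ring
    omega

/-- For `n ≥ 2` distinct nonnegative values arriving in uniformly random order, the
wait-and-pick algorithm with cutoff `m = ⌊n/2⌋` has expected value at least `(max_i v_i)/4`. -/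
theorem fiftyPercent_algorithm (n : ℕ) (hn : 2 ≤ n) (v : Fin n → ℝ)
    (hinj : Function.Injective v) (hnonneg : ∀ i, 0 ≤ v i) :
    Finset.univ.sup' ⟨⟨0, by omega⟩, Finset.mem_univ _⟩ v / 4 ≤
      (∑ π : Equiv.Perm (Fin n), waitPick n v π (n / 2)) / (Nat.factorial n : ℝ) := by
  set m := n / 2 with hm
  have hm1 : 1 ≤ m := by omega
  have hmn : m < n := by omega
  -- the maximum
  obtain ⟨i₁, _, hsup⟩ := Finset.exists_mem_eq_sup'
    (⟨⟨0, by omega⟩, Finset.mem_univ _⟩ : (Finset.univ : Finset (Fin n)).Nonempty) v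
  have h1 : ∀ j, j ≠ i₁ → v j < v i₁ := by
    intro j hj
    have hle : v j ≤ v i₁ := by
      rw [← hsup]; exact Finset.le_sup' v (Finset.mem_univ j)
    exact lt_of_le_of_ne hle (fun h => hj (hinj h))
  -- the second maximum
  have herase : (Finset.univ.erase i₁).Nonempty := by
    rw [← Finset.card_pos, Finset.card_erase_of_mem (Finset.mem_univ _)]
    simp [Fintype.card_fin]; omega
  obtain ⟨i₂, hi₂mem, hsup₂⟩ := Finset.exists_mem_eq_sup' herase v
  have hi₂ne : i₂ ≠ i₁ := (Finset.mem_erase.mp hi₂mem).1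
  have h2 : ∀ j, j ≠ i₁ → v j ≤ v i₂ := by
    intro j hj
    rw [← hsup₂]
    exact Finset.le_sup' v (Finset.mem_erase.mpr ⟨hj, Finset.mem_univ j⟩)
  -- the good set of permutations
  set S := Finset.univ.filter (fun π : Equiv.Perm (Fin n) =>
      ((π.symm i₂ : Fin n) : ℕ) < m ∧ m ≤ ((π.symm i₁ : Fin n) : ℕ)) with hS
  -- fiber map
  set f : Equiv.Perm (Fin n) → Fin n × Fin n := fun π => (π.symm i₂, π.symm i₁) with hf
  set P := (Finset.univ : Finset (Fin n × Fin n)).filter (fun p => p.1 ≠ p.2) with hP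
  have hfP : ∀ π : Equiv.Perm (Fin n), f π ∈ P := by
    intro π
    simp only [hP, hf, Finset.mem_filter, Finset.mem_univ, true_and]
    exact fun h => hi₂ne (π.symm.injective h)
  -- canonical fiber cardinality
  set a₀ : Fin n := ⟨0, by omega⟩ with ha₀
  set b₀ : Fin n := ⟨1, by omega⟩ with hb₀
  have hab₀ : a₀ ≠ b₀ := by simp [ha₀, hb₀, Fin.ext_iff]
  set c := (Finset.univ.filter
      (fun π : Equiv.Perm (Fin n) => π a₀ = i₂ ∧ π b₀ = i₁)).card with hc
  have hfiber : ∀ p ∈ P,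
      (Finset.univ.filter (fun π : Equiv.Perm (Fin n) => f π = p)).card = c := by
    rintro ⟨a, b⟩ hp
    simp only [hP, Finset.mem_filter, Finset.mem_univ, true_and] at hp
    have : (Finset.univ.filter (fun π : Equiv.Perm (Fin n) => f π = (a, b)))
        = Finset.univ.filter (fun π : Equiv.Perm (Fin n) => π a = i₂ ∧ π b = i₁) := by
      ext π
      simp only [Finset.mem_filter, Finset.mem_univ, true_and, hf, Prod.mk.injEq]
      constructor
      · rintro ⟨h1', h2'⟩
        constructor
        · rw [← h1']; simp
        · rw [← h2']; simp
      · rintro ⟨h1', h2'⟩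
        constructor
        · rw [← h1']; simp
        · rw [← h2']; simp
    rw [this]
    exact fiber_card_eq n i₁ i₂ a b a₀ b₀ hp hab₀
  -- total count
  have htotal : n.factorial = P.card * c := by
    have := Finset.card_eq_sum_card_fiberwise
      (f := f) (s := (Finset.univ : Finset (Equiv.Perm (Fin n)))) (t := P)
      (fun x _ => hfP x)
    rw [Finset.sum_congr rfl hfiber, Finset.sum_const, smul_eq_mul] at this
    rw [← this, Finset.card_univ, Fintype.card_perm, Fintype.card_fin]
  have hPcard : P.card = n * n - n := by
    have hPoff : P = (Finset.univ : Finset (Fin n)).offDiag := by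
      ext p
      simp [hP, Finset.mem_offDiag]
    rw [hPoff, Finset.offDiag_card, Finset.card_univ, Fintype.card_fin]
  -- good pairs
  set P' := P.filter (fun p : Fin n × Fin n => ((p.1 : Fin n) : ℕ) < m ∧ m ≤ ((p.2 : Fin n) : ℕ))
    with hP'
  have hP'eq : P' = (Finset.univ : Finset (Fin n × Fin n)).filter
      (fun p => ((p.1 : Fin n) : ℕ) < m ∧ m ≤ ((p.2 : Fin n) : ℕ)) := by
    rw [hP', hP, Finset.filter_filter]
    apply Finset.filter_congr
    intro p _
    constructor
    · exact fun h => h.2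
    · intro h
      refine ⟨fun he => ?_, h⟩
      rw [he] at h
      omega
  have hP'card : P'.card = m * (n - m) := by
    have hprod : (Finset.univ : Finset (Fin n × Fin n)).filter
        (fun p => ((p.1 : Fin n) : ℕ) < m ∧ m ≤ ((p.2 : Fin n) : ℕ))
        = (Finset.univ.filter (fun a : Fin n => (a : ℕ) < m)) ×ˢ
          (Finset.univ.filter (fun b : Fin n => m ≤ (b : ℕ))) := by
      ext ⟨x, y⟩
      simp [Finset.mem_product]
    rw [hP'eq, hprod, Finset.card_product,
      card_filter_lt n m (le_of_lt hmn), card_filter_ge n m (le_of_lt hmn)]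
  -- count of good permutations
  have hScard : S.card = m * (n - m) * c := by
    have hmem : ∀ π ∈ S, f π ∈ P' := by
      intro π hπ
      simp only [hS, Finset.mem_filter, Finset.mem_univ, true_and] at hπ
      rw [hP', Finset.mem_filter]
      exact ⟨hfP π, hπ⟩
    have := Finset.card_eq_sum_card_fiberwise hmem
    have hfib' : ∀ p ∈ P', (S.filter (fun π => f π = p)).card = c := by
      intro p hp
      rw [hP', Finset.mem_filter] at hp
      have : S.filter (fun π => f π = p)
          = Finset.univ.filter (fun π : Equiv.Perm (Fin n) => f π = p) := by
        ext π
        simp only [hS, Finset.mem_filter, Finset.mem_univ, true_and, and_iff_right_iff_imp]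
        intro h
        rw [show π.symm i₂ = (f π).1 from rfl, show π.symm i₁ = (f π).2 from rfl, h]
        exact hp.2
      rw [this]
      exact hfiber p hp.1
    rw [Finset.sum_congr rfl hfib', Finset.sum_const, smul_eq_mul] at this
    rw [this, hP'card]
  -- the key inequality on counts
  have hkey : n.factorial ≤ 4 * S.card := by
    rw [hScard, htotal, hPcard]
    have hc4 : n * n - n ≤ 4 * (m * (n - m)) := by rw [hm]; exact nat_ineq n hn
    calc (n * n - n) * c ≤ 4 * (m * (n - m)) * c := Nat.mul_le_mul_right c hc4
      _ = 4 * (m * (n - m) * c) := by ring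
  -- on S, the algorithm picks the max
  have hpick : ∀ π ∈ S, waitPick n v π m = v i₁ := by
    intro π hπ
    simp only [hS, Finset.mem_filter, Finset.mem_univ, true_and] at hπ
    exact waitPick_eq_max n m v π i₁ i₂ h1 h2 (π.symm i₂) (π.symm i₁)
      (π.apply_symm_apply i₂) (π.apply_symm_apply i₁) hπ.1 hπ.2
  -- sum lower bound
  have hM0 : 0 ≤ v i₁ := hnonneg i₁
  have hsumS : (S.card : ℝ) * v i₁ ≤ ∑ π : Equiv.Perm (Fin n), waitPick n v π m := by
    have hsub : ∑ π ∈ S, waitPick n v π m ≤ ∑ π : Equiv.Perm (Fin n), waitPick n v π m := by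
      apply Finset.sum_le_sum_of_subset_of_nonneg (Finset.subset_univ S)
      intro π _ _
      exact waitPick_nonneg n v hnonneg π m
    have heqS : ∑ π ∈ S, waitPick n v π m = (S.card : ℝ) * v i₁ := by
      rw [Finset.sum_congr rfl hpick, Finset.sum_const, nsmul_eq_mul]
    linarith
  -- conclude
  rw [hsup]
  have hfac : (0 : ℝ) < (n.factorial : ℝ) := by positivity
  rw [div_le_div_iff₀ (by norm_num) hfac]
  have hkey' : (n.factorial : ℝ) ≤ 4 * (S.card : ℝ) := by
    exact_mod_cast hkey
  nlinarith [hsumS, hkey', hM0, mul_nonneg (Nat.cast_nonneg S.card) hM0]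
end

section
/- Fix n ≥ 2, distinct real values v_1, …, v_n, an integer 1 ≤ m ≤ n−1, and any permutation π of {1, …, n}. If the position at which the maximum value arrives is greater than m and the position at which the second-largest value arrives is at most m, then the wait-and-pick algorithm with cutoff m picks the maximum value. -/
/-- If the maximum value arrives at a (1-indexed) position `> m` (i.e. 0-indexed position `≥ m`)
and the second-largest value arrives at a position `≤ m` (0-indexed position `< m`), then the
wait-and-pick algorithm with cutoff `m` picks the maximum value. -/
theorem waitPick_picks_max (n : ℕ) (hn : 2 ≤ n) (v : Fin n → ℝ)
    (hinj : Function.Injective v)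
    (m : ℕ) (hm1 : 1 ≤ m) (hm2 : m ≤ n - 1) (π : Equiv.Perm (Fin n))
    (imax isec : Fin n) (hmax : ∀ k, v k ≤ v imax)
    (hne : isec ≠ imax) (hsec : ∀ k, k ≠ imax → v k ≤ v isec)
    (hpos_max : m ≤ ((π.symm imax : Fin n) : ℕ))
    (hpos_sec : ((π.symm isec : Fin n) : ℕ) < m) :
    waitPick n v π m = v imax := by
  set T : Fin n := π.symm imax with hT
  have hπT : π T = imax := π.apply_symm_apply imax
  have hstrict : ∀ k, k ≠ imax → v k < v imax := fun k hk =>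
    lt_of_le_of_ne (hmax k) (fun h => hk (hinj h))
  set S := Finset.univ.filter (fun t : Fin n =>
      m ≤ (t : ℕ) ∧ ∀ s : Fin n, s < t → v (π s) < v (π t)) with hS
  have hTmem : T ∈ S := by
    simp only [hS, Finset.mem_filter, Finset.mem_univ, true_and]
    refine ⟨hpos_max, fun s hs => ?_⟩
    rw [hπT]
    refine hstrict _ (fun h => (ne_of_lt hs) ?_)
    have : π s = π T := by rw [h, hπT]
    exact π.injective this
  have hne' : S.Nonempty := ⟨T, hTmem⟩
  have hmin : S.min' hne' = T := by
    have h1 : S.min' hne' ≤ T := Finset.min'_le _ _ hTmem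
    rcases lt_or_eq_of_le h1 with h | h
    · exfalso
      obtain ⟨-, htm, hpm⟩ := Finset.mem_filter.mp (S.min'_mem hne')
      set t := S.min' hne'
      have hs : π.symm isec < t := by
        have : ((π.symm isec : Fin n) : ℕ) < (t : ℕ) := lt_of_lt_of_le hpos_sec htm
        exact this
      have := hpm _ hs
      rw [π.apply_symm_apply] at this
      have htne : π t ≠ imax := fun hh => (ne_of_lt h) (by
        rw [hT, ← hh, π.symm_apply_apply])
      exact absurd (hsec _ htne) (not_le.mpr this)
    · exact h
  rw [waitPick, dif_pos hne']
  show v (π (S.min' hne')) = v imax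
  rw [hmin, hπT]
end

section
/- With m_n = ⌈n/e⌉ and H_k = Σ_{j=1}^{k} 1/j the k-th harmonic number, the success probability of the wait-and-pick rule with cutoff m_n, namely (m_n/n)(H_{n−1} − H_{m_n−1}), converges to 1/e as n → ∞. -/
open Filter Real Topology

/-- The `k`-th harmonic number `H_k = Σ_{j=1}^{k} 1/j`, as a real number. -/
noncomputable def harm (k : ℕ) : ℝ := ∑ j ∈ Finset.Icc 1 k, (1 : ℝ) / (j : ℝ)

lemma harm_eq (k : ℕ) : harm k = (harmonic k : ℝ) := by
  rw [harm, harmonic_eq_sum_Icc]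
  push_cast
  simp [one_div]

lemma tendsto_harm_sub_log :
    Tendsto (fun k : ℕ => harm k - Real.log k) atTop (𝓝 Real.eulerMascheroniConstant) := by
  simpa [harm_eq] using Real.tendsto_harmonic_sub_log

noncomputable def mfun (n : ℕ) : ℕ := ⌈(n : ℝ) / Real.exp 1⌉₊

lemma mfun_tendsto_atTop : Tendsto mfun atTop atTop :=
  tendsto_nat_ceil_atTop.comp
    (tendsto_natCast_atTop_atTop.atTop_div_const (Real.exp_pos 1))

lemma ratio_tendsto :
    Tendsto (fun n : ℕ => (mfun n : ℝ) / n) atTop (𝓝 (Real.exp 1)⁻¹) := by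
  have h1 : Tendsto (fun n : ℕ => (Real.exp 1)⁻¹ + 1 / (n : ℝ)) atTop
      (𝓝 ((Real.exp 1)⁻¹ + 0)) :=
    tendsto_const_nhds.add tendsto_one_div_atTop_nhds_zero_nat
  rw [add_zero] at h1
  apply tendsto_of_tendsto_of_tendsto_of_le_of_le' tendsto_const_nhds h1
  · filter_upwards [eventually_gt_atTop 0] with n hn
    have hn' : (0 : ℝ) < n := by exact_mod_cast hn
    rw [le_div_iff₀ hn']
    calc (Real.exp 1)⁻¹ * n = (n : ℝ) / Real.exp 1 := by
          rw [div_eq_mul_inv, mul_comm]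
      _ ≤ (mfun n : ℝ) := Nat.le_ceil _
  · filter_upwards [eventually_gt_atTop 0] with n hn
    have hn' : (0 : ℝ) < n := by exact_mod_cast hn
    rw [div_le_iff₀ hn']
    have h := (Nat.ceil_lt_add_one (a := (n : ℝ) / Real.exp 1) (by positivity)).le
    have heq : ((Real.exp 1)⁻¹ + 1 / (n : ℝ)) * n = (n : ℝ) / Real.exp 1 + 1 := by
      field_simp
    rw [heq]
    exact h

lemma log_sub_log_pred :
    Tendsto (fun k : ℕ => Real.log k - Real.log ((k - 1 : ℕ) : ℝ)) atTop (𝓝 0) := by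
  have g := Real.tendsto_log_nat_add_one_sub_log
  have h := g.comp (tendsto_sub_atTop_nat 1)
  apply h.congr'
  filter_upwards [eventually_ge_atTop 1] with n hn
  have hcast : ((n - 1 : ℕ) : ℝ) + 1 = (n : ℝ) := by
    have : (1 : ℕ) ≤ n := hn
    push_cast [Nat.cast_sub this]
    ring
  simp only [Function.comp, hcast]

/-- With `m_n = ⌈n/e⌉`, the success probability `(m_n/n)(H_{n-1} - H_{m_n - 1})` of the
wait-and-pick rule with cutoff `m_n` converges to `1/e` as `n → ∞`. -/
theorem waitPick_cutoff_n_over_e_tendsto_inv_e :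
    Filter.Tendsto
      (fun n : ℕ =>
        ((⌈(n : ℝ) / Real.exp 1⌉₊ : ℝ) / (n : ℝ)) *
          (harm (n - 1) - harm (⌈(n : ℝ) / Real.exp 1⌉₊ - 1)))
      Filter.atTop (nhds (Real.exp 1)⁻¹) := by
  show Tendsto
      (fun n : ℕ => ((mfun n : ℝ) / n) * (harm (n - 1) - harm (mfun n - 1)))
      atTop (𝓝 (Real.exp 1)⁻¹)
  set γ := Real.eulerMascheroniConstant
  have hT1 : Tendsto (fun n : ℕ => harm (n - 1) - Real.log ((n - 1 : ℕ) : ℝ)) atTop (𝓝 γ) := by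
    simpa [Function.comp_def] using tendsto_harm_sub_log.comp (tendsto_sub_atTop_nat 1)
  have hT2 : Tendsto (fun n : ℕ => harm (mfun n - 1) - Real.log ((mfun n - 1 : ℕ) : ℝ))
      atTop (𝓝 γ) := by
    simpa [Function.comp_def] using
      tendsto_harm_sub_log.comp ((tendsto_sub_atTop_nat 1).comp mfun_tendsto_atTop)
  have hT3 : Tendsto (fun n : ℕ => Real.log ((n - 1 : ℕ) : ℝ) - Real.log n) atTop (𝓝 0) := by
    simpa using log_sub_log_pred.neg
  have hT5 : Tendsto (fun n : ℕ => Real.log (mfun n) - Real.log ((mfun n - 1 : ℕ) : ℝ))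
      atTop (𝓝 0) := by
    simpa [Function.comp_def] using log_sub_log_pred.comp mfun_tendsto_atTop
  have hT4 : Tendsto (fun n : ℕ => Real.log n - Real.log (mfun n)) atTop (𝓝 1) := by
    have hlog : Tendsto (fun n : ℕ => Real.log ((mfun n : ℝ) / n)) atTop
        (𝓝 (Real.log (Real.exp 1)⁻¹)) :=
      ((Real.continuousAt_log (by positivity)).tendsto).comp ratio_tendsto
    have := hlog.neg
    rw [Real.log_inv, Real.log_exp, neg_neg] at this
    apply this.congr'
    filter_upwards [eventually_ge_atTop 1, mfun_tendsto_atTop.eventually_ge_atTop 1]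
      with n hn hm
    have hn' : ((n : ℝ)) ≠ 0 := Nat.cast_ne_zero.mpr (by omega)
    have hm' : ((mfun n : ℝ)) ≠ 0 := Nat.cast_ne_zero.mpr (by omega)
    show -Real.log ((mfun n : ℝ) / n) = _
    rw [Real.log_div hm' hn']
    ring
  have total := ratio_tendsto.mul ((((hT1.sub hT2).add hT3).add hT4).add hT5)
  have hval : (Real.exp 1)⁻¹ * (γ - γ + 0 + 1 + 0) = (Real.exp 1)⁻¹ := by ring
  rw [hval] at total
  exact total.congr (fun n => by ring)
end

section
/- Let G be a bipartite graph between a set U of n agents and a set W of items, with nonnegative edge weights v_{ij}. For a subset T ⊆ U, let val(T) denote the maximum total weight of a matching in the subgraph induced on T ∪ W. Then for every 0 ≤ i ≤ n, if T is a uniformly random subset of U of size i, the expected value E[val(T)] is at least (i/n) · val(U). -/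
/-- The maximum total weight `val(T)` of a matching in the bipartite graph between the agents in
`T` and the items `W`, where matchings are encoded as functions `f : U → Option W` assigning to
each agent at most one item, with agents outside `T` getting nothing, and distinct agents
getting distinct items. -/
noncomputable def matchingVal (U W : Type*) [Fintype U] [Fintype W] [DecidableEq U]
    [DecidableEq W] (v : U → W → ℝ) (T : Finset U) : ℝ :=
  (Finset.univ.filter (fun f : U → Option W =>
      (∀ i, i ∉ T → f i = none) ∧ ∀ i j : U, i ≠ j → f i ≠ none → f i ≠ f j)).sup'
    ⟨fun _ => none, by simp⟩
    (fun f => ∑ i ∈ T, (f i).elim 0 (v i))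

lemma matchingVal_nonneg (U W : Type*) [Fintype U] [Fintype W] [DecidableEq U]
    [DecidableEq W] (v : U → W → ℝ) (hv : ∀ i j, 0 ≤ v i j) (T : Finset U) :
    0 ≤ matchingVal U W v T := by
  have h := Finset.le_sup' (s := Finset.univ.filter (fun f : U → Option W =>
      (∀ i, i ∉ T → f i = none) ∧ ∀ i j : U, i ≠ j → f i ≠ none → f i ≠ f j))
    (fun f => ∑ i ∈ T, (f i).elim 0 (v i)) (b := fun _ => none) (by simp)
  simpa [matchingVal] using h

lemma matchingVal_ge_restrict (U W : Type*) [Fintype U] [Fintype W] [DecidableEq U]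
    [DecidableEq W] (v : U → W → ℝ) (T : Finset U) (f : U → Option W)
    (hf : ∀ i j : U, i ≠ j → f i ≠ none → f i ≠ f j) :
    ∑ j ∈ T, (f j).elim 0 (v j) ≤ matchingVal U W v T := by
  set g : U → Option W := fun j => if j ∈ T then f j else none with hg
  have hmem : g ∈ Finset.univ.filter (fun f : U → Option W =>
      (∀ i, i ∉ T → f i = none) ∧ ∀ i j : U, i ≠ j → f i ≠ none → f i ≠ f j) := by
    simp only [Finset.mem_filter, Finset.mem_univ, true_and]
    constructor
    · intro i hi; simp [hg, hi]
    · intro a b hab ha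
      by_cases haT : a ∈ T
      · by_cases hbT : b ∈ T
        · simpa [hg, haT, hbT] using hf a b hab (by simpa [hg, haT] using ha)
        · simp only [hg, haT, hbT, if_true, if_false]
          simpa [hg, haT] using ha
      · simp [hg, haT] at ha
  have h := Finset.le_sup' (s := Finset.univ.filter (fun f : U → Option W =>
      (∀ i, i ∉ T → f i = none) ∧ ∀ i j : U, i ≠ j → f i ≠ none → f i ≠ f j))
    (fun f => ∑ i ∈ T, (f i).elim 0 (v i)) hmem
  have heq : ∑ j ∈ T, (g j).elim 0 (v j) = ∑ j ∈ T, (f j).elim 0 (v j) :=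
    Finset.sum_congr rfl (fun j hj => by simp [hg, hj])
  rw [matchingVal]
  calc ∑ j ∈ T, (f j).elim 0 (v j) = ∑ j ∈ T, (g j).elim 0 (v j) := heq.symm
    _ ≤ _ := h

lemma nat_binom_id (n i : ℕ) (h1 : 1 ≤ i) (h2 : i ≤ n) :
    i * n.choose i = n * (n - 1).choose (i - 1) := by
  obtain ⟨m, rfl⟩ : ∃ m, n = m + 1 := ⟨n - 1, by omega⟩
  obtain ⟨k, rfl⟩ : ∃ k, i = k + 1 := ⟨i - 1, by omega⟩
  simp only [Nat.add_sub_cancel]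
  have h := Nat.add_one_mul_choose_eq m k
  rw [mul_comm]
  exact h.symm

lemma count_subsets_containing (U : Type*) [Fintype U] [DecidableEq U] (a : U) (i : ℕ)
    (hi : 1 ≤ i) :
    ((Finset.powersetCard i (Finset.univ : Finset U)).filter (fun T => a ∈ T)).card
      = (Fintype.card U - 1).choose (i - 1) := by
  have hcard : ((Finset.univ : Finset U).erase a).card = Fintype.card U - 1 := by
    simp [Finset.card_erase_of_mem]
  rw [← hcard, ← Finset.card_powersetCard]
  refine Finset.card_nbij' (fun T => T.erase a) (fun S => insert a S) ?_ ?_ ?_ ?_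
  · intro T hT
    simp only [Finset.mem_coe, Finset.mem_filter, Finset.mem_powersetCard] at hT
    simp only [Finset.mem_coe, Finset.mem_powersetCard]
    refine ⟨fun x hx => ?_, by rw [Finset.card_erase_of_mem hT.2, hT.1.2]⟩
    simp only [Finset.mem_erase] at hx ⊢
    exact ⟨hx.1, Finset.mem_univ _⟩
  · intro S hS
    simp only [Finset.mem_coe, Finset.mem_powersetCard] at hS
    have haS : a ∉ S := fun h => by
      have h2 := hS.1 h
      rw [Finset.mem_erase] at h2
      exact h2.1 rfl
    simp only [Finset.mem_coe, Finset.mem_filter, Finset.mem_powersetCard]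
    refine ⟨⟨Finset.subset_univ _, ?_⟩, Finset.mem_insert_self _ _⟩
    rw [Finset.card_insert_of_notMem haS, hS.2]
    omega
  · intro T hT
    simp only [Finset.mem_coe, Finset.mem_filter] at hT
    exact Finset.insert_erase hT.2
  · intro S hS
    simp only [Finset.mem_coe, Finset.mem_powersetCard] at hS
    have haS : a ∉ S := fun h => by
      have h2 := hS.1 h
      rw [Finset.mem_erase] at h2
      exact h2.1 rfl
    exact Finset.erase_insert haS

/-- For a bipartite graph on `n` agents and items `W` with nonnegative edge weights, and any
`0 ≤ i ≤ n`, a uniformly random subset `T` of agents of size `i` satisfies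
`E[val(T)] ≥ (i/n) · val(U)`. -/
theorem expected_matching_val_random_subset (U W : Type*) [Fintype U] [Fintype W]
    [DecidableEq U] [DecidableEq W] (v : U → W → ℝ) (hv : ∀ i j, 0 ≤ v i j)
    (i : ℕ) (hi : i ≤ Fintype.card U) :
    ((i : ℝ) / (Fintype.card U : ℝ)) * matchingVal U W v Finset.univ ≤
      (∑ T ∈ Finset.powersetCard i (Finset.univ : Finset U), matchingVal U W v T) /
        ((Fintype.card U).choose i : ℝ) := by
  set n := Fintype.card U with hn
  have hsum_nonneg : 0 ≤ ∑ T ∈ Finset.powersetCard i (Finset.univ : Finset U),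
      matchingVal U W v T :=
    Finset.sum_nonneg fun T _ => matchingVal_nonneg U W v hv T
  have hC : 0 < (n.choose i : ℝ) := by
    exact_mod_cast Nat.choose_pos hi
  rcases Nat.eq_zero_or_pos i with rfl | hipos
  · simp only [Nat.cast_zero, zero_div, zero_mul]
    positivity
  have hnpos : 0 < n := lt_of_lt_of_le hipos hi
  -- extract optimal matching
  obtain ⟨f₀, hf₀mem, hf₀⟩ := Finset.exists_mem_eq_sup'
    (s := Finset.univ.filter (fun f : U → Option W =>
      (∀ j, j ∉ (Finset.univ : Finset U) → f j = none) ∧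
        ∀ a b : U, a ≠ b → f a ≠ none → f a ≠ f b))
    ⟨fun _ => none, by simp⟩ (fun f => ∑ j ∈ Finset.univ, (f j).elim 0 (v j))
  have hf₀inj : ∀ a b : U, a ≠ b → f₀ a ≠ none → f₀ a ≠ f₀ b := by
    simp only [Finset.mem_filter] at hf₀mem
    exact hf₀mem.2.2
  have hval : matchingVal U W v Finset.univ = ∑ j ∈ Finset.univ, (f₀ j).elim 0 (v j) := by
    rw [matchingVal]; exact hf₀
  set w : U → ℝ := fun j => (f₀ j).elim 0 (v j) with hw
  have hwnn : ∀ j, 0 ≤ w j := by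
    intro j; cases h : f₀ j <;> simp [hw, h, hv]
  -- lower-bound the sum
  have key : ((Fintype.card U - 1).choose (i - 1) : ℝ) * matchingVal U W v Finset.univ ≤
      ∑ T ∈ Finset.powersetCard i (Finset.univ : Finset U), matchingVal U W v T := by
    have step1 : ∀ T ∈ Finset.powersetCard i (Finset.univ : Finset U),
        ∑ j ∈ T, w j ≤ matchingVal U W v T := fun T _ =>
      matchingVal_ge_restrict U W v T f₀ hf₀inj
    have step2 : ∑ T ∈ Finset.powersetCard i (Finset.univ : Finset U), ∑ j ∈ T, w j
        = ((Fintype.card U - 1).choose (i - 1) : ℝ) * ∑ j ∈ Finset.univ, w j := by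
      have : ∀ T : Finset U, ∑ j ∈ T, w j = ∑ j ∈ Finset.univ, if j ∈ T then w j else 0 := by
        intro T
        rw [Finset.sum_ite_mem]
        congr 1
        simp [Finset.univ_inter]
      simp_rw [this]
      rw [Finset.sum_comm]
      rw [Finset.mul_sum]
      apply Finset.sum_congr rfl
      intro j _
      rw [← Finset.sum_filter, Finset.sum_const, count_subsets_containing U j i hipos]
      simp [mul_comm]
    calc ((Fintype.card U - 1).choose (i - 1) : ℝ) * matchingVal U W v Finset.univ
        = ∑ T ∈ Finset.powersetCard i (Finset.univ : Finset U), ∑ j ∈ T, w j := by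
          rw [hval, ← step2]
      _ ≤ _ := Finset.sum_le_sum step1
  -- the binomial identity
  have hbinom : (i : ℝ) * (n.choose i : ℝ) = (n : ℝ) * ((n - 1).choose (i - 1) : ℝ) := by
    exact_mod_cast nat_binom_id n i hipos hi
  rw [le_div_iff₀ hC]
  have hV : 0 ≤ matchingVal U W v Finset.univ := matchingVal_nonneg U W v hv _
  have : (i : ℝ) / (n : ℝ) * matchingVal U W v Finset.univ * (n.choose i : ℝ)
      = ((n - 1).choose (i - 1) : ℝ) * matchingVal U W v Finset.univ := by
    have hn0 : (n : ℝ) ≠ 0 := by positivity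
    field_simp
    ring_nf
    nlinarith [hbinom]
  rw [this]
  exact key
end

section
/- Let s : I → (0, 1] be the sizes of a finite nonempty set of items, and suppose the items are partitioned into B nonempty bins such that for every two distinct bins, the total size of items in those two bins exceeds 1. Then B ≤ ⌈2 · Σ_{i∈I} s_i⌉. (This is the key invariant showing the Best Fit bin-packing algorithm uses at most ⌈2 Σ_i s_i⌉ bins, hence at most twice the optimal number of bins.) -/
/-- If a finite nonempty set of items with sizes in `(0,1]` is partitioned into `B` nonempty
bins (each of total size at most 1) such that the total size of every two distinct bins exceeds
`1`, then `B ≤ ⌈2 · Σ_i s_i⌉`. -/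
theorem bins_le_ceil_two_mul_total (I : Type*) [Fintype I] [Nonempty I] [DecidableEq I]
    (s : I → ℝ) (hs : ∀ i, 0 < s i ∧ s i ≤ 1)
    (B : ℕ) (bins : Fin B → Finset I)
    (hdisj : ∀ j k, j ≠ k → Disjoint (bins j) (bins k))
    (hcover : ∀ i : I, ∃ j, i ∈ bins j)
    (hne : ∀ j, (bins j).Nonempty)
    (hcap : ∀ j, ∑ i ∈ bins j, s i ≤ 1)
    (hpair : ∀ j k, j ≠ k → 1 < (∑ i ∈ bins j, s i) + (∑ i ∈ bins k, s i)) :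
    B ≤ ⌈2 * ∑ i : I, s i⌉₊ := by
  rcases Nat.eq_zero_or_pos B with hB | hB
  · simp [hB]
  set L : Fin B → ℝ := fun j => ∑ i ∈ bins j, s i with hL
  -- the total size dominates the sum of loads
  have hsum : ∑ j, L j ≤ ∑ i : I, s i := by
    rw [hL, ← Finset.sum_biUnion (fun j _ k _ hjk => hdisj j k hjk)]
    exact Finset.sum_le_sum_of_subset_of_nonneg (Finset.subset_univ _)
      (fun i _ _ => (hs i).1.le)
  -- a minimum-load bin
  have : Nonempty (Fin B) := Fin.pos_iff_nonempty.mp hB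
  obtain ⟨j0, -, hj0⟩ := Finset.exists_min_image Finset.univ L Finset.univ_nonempty
  have hL0 : 0 < L j0 := Finset.sum_pos (fun i _ => (hs i).1) (hne j0)
  have hLk : ∀ k ∈ Finset.univ.erase j0, (1:ℝ)/2 ≤ L k := by
    intro k hk
    have hk' : j0 ≠ k := (Finset.ne_of_mem_erase hk).symm
    have h1 : 1 < L j0 + L k := hpair j0 k hk'
    have h2 : L j0 ≤ L k := hj0 k (Finset.mem_univ k)
    linarith
  have hcard : (Finset.univ.erase j0).card = B - 1 := by
    rw [Finset.card_erase_of_mem (Finset.mem_univ j0), Finset.card_univ, Fintype.card_fin]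
  have hsplit : ∑ j, L j = L j0 + ∑ j ∈ Finset.univ.erase j0, L j :=
    (Finset.add_sum_erase _ _ (Finset.mem_univ j0)).symm
  have hrest : ((B - 1 : ℕ) : ℝ) * (1/2) ≤ ∑ j ∈ Finset.univ.erase j0, L j := by
    have := Finset.card_nsmul_le_sum (Finset.univ.erase j0) L (1/2) hLk
    rw [hcard] at this
    simpa [nsmul_eq_mul] using this
  have hcast : ((B - 1 : ℕ) : ℝ) = (B : ℝ) - 1 := by
    push_cast [Nat.cast_sub hB]
    ring
  have key : ((B : ℝ) - 1) < 2 * ∑ i : I, s i := by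
    rw [← hcast]; nlinarith
  have : B - 1 < ⌈2 * ∑ i : I, s i⌉₊ := by
    apply Nat.lt_ceil.mpr
    rwa [hcast]
  omega
end

section
/- Let G be a finite graph, let M and M' be matchings in G with |M'| = |M| + k for some k ≥ 1. Then the symmetric difference M △ M' contains at least k pairwise vertex-disjoint M-augmenting paths (paths whose edges alternate between M' \ M and M \ M', beginning and ending with edges of M' at vertices unmatched by M), and the total number of edges in these paths is at most |M| + |M'|. -/
section AugAux
open SimpleGraph


lemma filter_length_parity {α : Type*} (p : α → Prop) [DecidablePred p] :
    ∀ (L : List α) (r : ℕ),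
      (∀ i (hi : i < L.length), p (L.get ⟨i, hi⟩) ↔ (i + r) % 2 = 0) →
      (L.filter (fun a => decide (p a))).length = (L.length + (1 - r % 2)) / 2 := by
  intro L
  induction L with
  | nil => intro r _; simp; omega
  | cons a T ih =>
    intro r h
    have h0 : p a ↔ r % 2 = 0 := by simpa using h 0 (by simp)
    have hT : ∀ i (hi : i < T.length), p (T.get ⟨i, hi⟩) ↔ (i + (r+1)) % 2 = 0 := by
      intro i hi
      have := h (i+1) (by simpa using Nat.succ_lt_succ hi)
      simpa [Nat.add_assoc, Nat.add_comm 1 r] using this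
    have hrec := ih (r+1) hT
    rcases Nat.even_or_odd r with he | ho
    · have hr : r % 2 = 0 := Nat.even_iff.mp he
      have hpa : p a := h0.mpr hr
      have hr1 : (r+1) % 2 = 1 := by omega
      rw [hr1] at hrec
      simp [List.filter_cons, hpa, hr, hrec]; omega
    · have hr : r % 2 = 1 := Nat.odd_iff.mp ho
      have hpa : ¬ p a := fun hp => by have := h0.mp hp; omega
      have hr1 : (r+1) % 2 = 0 := by omega
      rw [hr1] at hrec
      simp [List.filter_cons, hpa, hr, hrec]

lemma count_helper {α : Type*} [DecidableEq α] (L : List α) (hnd : L.Nodup) (s : Finset α)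
    (r : ℕ) (h : ∀ i (hi : i < L.length), L.get ⟨i, hi⟩ ∈ s ↔ (i + r) % 2 = 0) :
    (s ∩ L.toFinset).card = (L.length + (1 - r % 2)) / 2 := by
  have h1 := filter_length_parity (· ∈ s) L r h
  have h2 : (L.filter (fun a => decide (a ∈ s))).toFinset
      = L.toFinset.filter (fun a => a ∈ s) := by
    simpa using List.toFinset_filter L (fun a => decide (a ∈ s))
  have h3 : (L.filter (fun a => decide (a ∈ s))).Nodup := hnd.filter _
  have h4 := List.toFinset_card_of_nodup h3
  rw [h2] at h4
  rw [Finset.inter_comm, ← Finset.filter_mem_eq_inter, h4]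
  exact h1

lemma cover_card {V : Type*} [Fintype V] [DecidableEq V] (G : SimpleGraph V)
    (M : Finset (Sym2 V)) (hMG : ∀ e ∈ M, e ∈ G.edgeSet)
    (hM : ∀ e ∈ M, ∀ f ∈ M, e ≠ f → ∀ x, x ∈ e → x ∉ f) :
    (M.biUnion (fun e => Finset.univ.filter (· ∈ e))).card = 2 * M.card := by
  rw [Finset.card_biUnion]
  · rw [Finset.sum_congr rfl (fun e he => ?_), Finset.sum_const, smul_eq_mul, mul_comm]
    obtain ⟨a, b⟩ := e
    have hab : a ≠ b := by
      have := G.not_isDiag_of_mem_edgeSet (hMG _ he)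
      simpa [Sym2.mk_isDiag_iff] using this
    have : Finset.univ.filter (· ∈ (s(a,b) : Sym2 V)) = {a, b} := by
      ext x; simp [Sym2.mem_iff]
    rw [this, Finset.card_insert_of_notMem (by simp [hab]), Finset.card_singleton]
  · intro e he f hf hef
    rw [Function.onFun, Finset.disjoint_left]
    intro x hx hx'
    simp only [Finset.mem_filter] at hx hx'
    exact hM e he f hf hef x hx.2 hx'.2

lemma exists_start {V : Type*} [Fintype V] [DecidableEq V] (G : SimpleGraph V)
    (M M' : Finset (Sym2 V))
    (hMG : ∀ e ∈ M, e ∈ G.edgeSet) (hM'G : ∀ e ∈ M', e ∈ G.edgeSet)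
    (hM : ∀ e ∈ M, ∀ f ∈ M, e ≠ f → ∀ x, x ∈ e → x ∉ f)
    (hM' : ∀ e ∈ M', ∀ f ∈ M', e ≠ f → ∀ x, x ∈ e → x ∉ f)
    (hlt : M.card < M'.card) :
    ∃ v y0, s(v,y0) ∈ M' ∧ s(v,y0) ∉ M ∧ ∀ e ∈ M, v ∉ e := by
  by_contra hcon
  push_neg at hcon
  have hsub : (M'.biUnion (fun e => Finset.univ.filter (· ∈ e)))
      ⊆ (M.biUnion (fun e => Finset.univ.filter (· ∈ e))) := by
    intro v hv
    simp only [Finset.mem_biUnion, Finset.mem_filter, Finset.mem_univ, true_and] at hv ⊢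
    obtain ⟨e, he, hve⟩ := hv
    obtain ⟨y0, rfl⟩ := Sym2.mem_iff_exists.mp hve
    by_cases heM : s(v,y0) ∈ M
    · exact ⟨_, heM, by simp⟩
    · obtain ⟨f, hf, hvf⟩ := hcon v y0 he heM
      exact ⟨f, hf, hvf⟩
  have h1 := cover_card G M hMG hM
  have h2 := cover_card G M' hM'G hM'
  have := Finset.card_le_card hsub
  omega

lemma support_exists_edge {V : Type*} {G : SimpleGraph V} {a b : V} (P : G.Walk a b)
    (hP : P.length ≠ 0) : ∀ x ∈ P.support, ∃ e ∈ P.edges, x ∈ e := by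
  induction P with
  | nil => simp at hP
  | cons h q ih =>
    rename_i u v w
    intro x hx
    rw [SimpleGraph.Walk.support_cons] at hx
    rcases List.mem_cons.mp hx with rfl | hx
    · exact ⟨s(x, v), by simp, by simp⟩
    · cases q with
      | nil =>
        simp at hx; subst hx
        exact ⟨s(u, x), by simp, by simp⟩
      | cons h' q' =>
        obtain ⟨e, he, hxe⟩ := ih (by simp) x hx
        refine ⟨e, ?_, hxe⟩
        rw [SimpleGraph.Walk.edges_cons]
        exact List.mem_cons_of_mem _ he


lemma trace {V : Type*} [Fintype V] [DecidableEq V] (G : SimpleGraph V)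
    (M M' : Finset (Sym2 V))
    (hMG : ∀ e ∈ M, e ∈ G.edgeSet) (hM'G : ∀ e ∈ M', e ∈ G.edgeSet)
    (hM : ∀ e ∈ M, ∀ f ∈ M, e ≠ f → ∀ x, x ∈ e → x ∉ f)
    (hM' : ∀ e ∈ M', ∀ f ∈ M', e ≠ f → ∀ x, x ∈ e → x ∉ f) :
    ∀ (n : ℕ) (F' : Finset (Sym2 V)), F'.card ≤ n → (∀ e ∈ F', e ∈ M' ∧ e ∉ M) →
    ∀ (S : Finset V) (y : V), y ∉ S →
    (∀ x ∈ S, ∀ e ∈ M, x ∈ e → ∀ z ∈ e, z ∈ S) →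
    (∀ x ∈ S, ∀ e ∈ M', x ∈ e → ∀ z ∈ e, z ∈ S ∨ z = y) →
    (∀ e ∈ F', y ∉ e) →
    (∀ e ∈ M, y ∈ e → e ∉ M') →
    (∀ e ∈ M', y ∈ e → ∀ z ∈ e, z ∈ S ∨ z = y) →
    ∃ (w : V) (p : G.Walk y w),
      p.IsPath ∧
      (∀ x ∈ p.support, x ∉ S) ∧
      (∀ i (hi : i < p.edges.length),
        if i % 2 = 0 then p.edges.get ⟨i, hi⟩ ∈ M ∧ p.edges.get ⟨i, hi⟩ ∉ M'
        else p.edges.get ⟨i, hi⟩ ∈ F') ∧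
      (∀ x ∈ p.support, ∀ e ∈ M, x ∈ e → e ∈ p.edges) ∧
      (∀ x ∈ p.support, ∀ e ∈ M', x ∈ e → e ∈ p.edges ∨ e ∉ F') ∧
      (p.length % 2 = 0 ∧ (∀ e ∈ M, w ∉ e) ∨ p.length % 2 = 1) := by
  intro n
  induction n using Nat.strong_induction_on with
  | _ n IH =>
  intro F' hFn hF'sub S y hyS hSM hSM' hyF' hyMM' hyM'S
  by_cases hmatched : ∃ e ∈ M, y ∈ e
  case neg =>
    refine ⟨y, Walk.nil, by simp, ?_, by simp, ?_, ?_, Or.inl ⟨by simp, ?_⟩⟩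
    · intro x hx; simp at hx; subst hx; exact hyS
    · intro x hx e he hxe; simp at hx; subst hx
      exact absurd ⟨e, he, hxe⟩ hmatched
    · intro x hx e he hxe; simp at hx; subst hx
      exact Or.inr (fun hF => hyF' e hF hxe)
    · intro e he hye; exact absurd ⟨e, he, hye⟩ hmatched
  case pos =>
  obtain ⟨e, he, hye⟩ := hmatched
  obtain ⟨z, rfl⟩ := Sym2.mem_iff_exists.mp hye
  have hyz : y ≠ z := by
    have := G.not_isDiag_of_mem_edgeSet (hMG _ he)
    simpa [Sym2.mk_isDiag_iff] using this
  have hadj : G.Adj y z := (G.mem_edgeSet).mp (hMG _ he)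
  have huniqM : ∀ x, x ∈ (s(y,z) : Sym2 V) → ∀ f ∈ M, x ∈ f → f = s(y,z) := by
    intro x hxe f hf hxf
    by_contra hne
    exact hM f hf _ he hne x hxf hxe
  have hznS : z ∉ S := by
    intro hzS
    exact hyS (hSM z hzS _ he (by simp) y (by simp))
  have heM' : s(y,z) ∉ M' := hyMM' _ he (by simp)
  by_cases hz : ∃ e1 ∈ F', z ∈ e1
  case neg =>
    refine ⟨z, Walk.cons hadj Walk.nil, by simp [Walk.cons_isPath_iff, hyz], ?_, ?_, ?_, ?_,
      Or.inr (by simp)⟩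
    · intro x hx; simp at hx
      rcases hx with rfl | rfl
      exacts [hyS, hznS]
    · intro i hi
      simp only [Walk.edges_cons, Walk.edges_nil, List.length_cons, List.length_nil] at hi
      interval_cases i
      · simpa using ⟨he, heM'⟩
    · intro x hx e' he' hxe'
      simp at hx
      have : e' = s(y,z) := by
        rcases hx with rfl | rfl
        · exact huniqM x (by simp) e' he' hxe'
        · exact huniqM x (by simp) e' he' hxe'
      simp [this]
    · intro x hx e' he' hxe'
      simp at hx
      refine Or.inr (fun hF => ?_)
      rcases hx with rfl | rfl
      · exact hyF' e' hF hxe'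
      · exact hz ⟨e', hF, hxe'⟩
  case pos =>
  obtain ⟨e1, he1F, hze1⟩ := hz
  obtain ⟨he1M', he1nM⟩ := hF'sub e1 he1F
  obtain ⟨y', rfl⟩ := Sym2.mem_iff_exists.mp hze1
  have hzy' : z ≠ y' := by
    have := G.not_isDiag_of_mem_edgeSet (hM'G _ he1M')
    simpa [Sym2.mk_isDiag_iff] using this
  have hadj2 : G.Adj z y' := (G.mem_edgeSet).mp (hM'G _ he1M')
  have huniqM' : ∀ x, x ∈ (s(z,y') : Sym2 V) → ∀ f ∈ M', x ∈ f → f = s(z,y') := by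
    intro x hxe f hf hxf
    by_contra hne
    exact hM' f hf _ he1M' hne x hxf hxe
  have hynE1 : y ∉ (s(z,y') : Sym2 V) := hyF' _ he1F
  have hy'ny : y' ≠ y := fun h => hynE1 (by simp [h])
  have hy'nS : y' ∉ S := by
    intro hS
    rcases hSM' y' hS _ he1M' (by simp) z (by simp) with hzS | hzy
    · exact hznS hzS
    · exact hynE1 (by simp [hzy])
  set S' : Finset V := insert y (insert z S) with hS'def
  have hF1 : 1 ≤ F'.card := Finset.card_pos.mpr ⟨_, he1F⟩
  have hcard'' : (F'.erase s(z,y')).card ≤ F'.card - 1 := by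
    rw [Finset.card_erase_of_mem he1F]
  obtain ⟨w, p', hpath', hsupS', halt', hP6', hP7', hout'⟩ :=
    IH (F'.card - 1) (by omega) (F'.erase s(z,y')) hcard''
      (fun e he => hF'sub e (Finset.mem_of_mem_erase he)) S' y'
      (by simp [hS'def, hy'ny, Ne.symm hzy', hy'nS])
      (by -- hSM for S'
        intro x hx e' he' hxe' z' hz'
        simp only [hS'def, Finset.mem_insert] at hx ⊢
        rcases hx with rfl | rfl | hxS
        · have := huniqM x (by simp) e' he' hxe'
          subst this
          rcases Sym2.mem_iff.mp hz' with rfl | rfl <;> simp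
        · have := huniqM x (by simp) e' he' hxe'
          subst this
          rcases Sym2.mem_iff.mp hz' with rfl | rfl <;> simp
        · exact Or.inr (Or.inr (hSM x hxS e' he' hxe' z' hz')))
      (by -- hSM' for S'
        intro x hx e' he' hxe' z' hz'
        simp only [hS'def, Finset.mem_insert] at hx ⊢
        rcases hx with rfl | rfl | hxS
        · rcases hyM'S e' he' hxe' z' hz' with h | h
          · exact Or.inl (Or.inr (Or.inr h))
          · exact Or.inl (Or.inl h)
        · have := huniqM' x (by simp) e' he' hxe'
          subst this
          rcases Sym2.mem_iff.mp hz' with rfl | rfl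
          · simp
          · exact Or.inr rfl
        · rcases hSM' x hxS e' he' hxe' z' hz' with h | h
          · exact Or.inl (Or.inr (Or.inr h))
          · exact Or.inl (Or.inl h))
      (by -- y' avoids F''
        intro e' he' hy'e
        have := huniqM' y' (by simp) e' (hF'sub e' (Finset.mem_of_mem_erase he')).1 hy'e
        subst this
        exact (Finset.notMem_erase _ _) he')
      (by -- y' M-edge not in M'
        intro e' he' hy'e he'M'
        have := huniqM' y' (by simp) e' he'M' hy'e
        subst this
        exact he1nM he')
      (by -- y' M'-edge endpoints in S' ∪ {y'}
        intro e' he' hy'e z' hz'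
        have := huniqM' y' (by simp) e' he' hy'e
        subst this
        rcases Sym2.mem_iff.mp hz' with rfl | rfl
        · exact Or.inl (by simp [hS'def])
        · exact Or.inr rfl)
  have hznp' : z ∉ p'.support := fun h => hsupS' z h (by simp [hS'def])
  have hynp' : y ∉ p'.support := fun h => hsupS' y h (by simp [hS'def])
  refine ⟨w, Walk.cons hadj (Walk.cons hadj2 p'), ?_, ?_, ?_, ?_, ?_, ?_⟩
  · rw [Walk.cons_isPath_iff, Walk.cons_isPath_iff]
    refine ⟨⟨hpath', hznp'⟩, ?_⟩
    simp only [Walk.support_cons, List.mem_cons]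
    rintro (rfl | h)
    · exact hyz rfl
    · exact hynp' h
  · intro x hx
    simp only [Walk.support_cons, List.mem_cons] at hx
    rcases hx with rfl | rfl | hx
    · exact hyS
    · exact hznS
    · exact fun hS => hsupS' x hx (by simp [hS'def, hS])
  · intro i hi
    simp only [Walk.edges_cons] at hi ⊢
    match i with
    | 0 => simpa using ⟨he, heM'⟩
    | 1 => simpa using he1F
    | (i+2) =>
      have hi' : i < p'.edges.length := by
        simpa [List.length_cons] using hi
      have := halt' i hi'
      have hpar : (i+2) % 2 = i % 2 := by omega
      simp only [List.get_eq_getElem, List.getElem_cons_succ, hpar]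
      rcases Nat.even_or_odd i with hev | hod
      · have h0 : i % 2 = 0 := Nat.even_iff.mp hev
        rw [if_pos h0]
        rw [if_pos h0] at this
        simpa [List.get_eq_getElem] using this
      · have h1 : i % 2 = 1 := Nat.odd_iff.mp hod
        rw [if_neg (by omega)]
        rw [if_neg (by omega)] at this
        exact Finset.mem_of_mem_erase (by simpa [List.get_eq_getElem] using this)
  · intro x hx e' he' hxe'
    simp only [Walk.support_cons, List.mem_cons, Walk.edges_cons] at hx ⊢
    rcases hx with rfl | rfl | hx
    · exact Or.inl (huniqM x (by simp) e' he' hxe')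
    · exact Or.inl (huniqM x (by simp) e' he' hxe')
    · exact Or.inr (Or.inr (hP6' x hx e' he' hxe'))
  · intro x hx e' he' hxe'
    simp only [Walk.support_cons, List.mem_cons, Walk.edges_cons] at hx ⊢
    rcases hx with rfl | rfl | hx
    · exact Or.inr (fun hF => hyF' e' hF hxe')
    · exact Or.inl (Or.inr (Or.inl (huniqM' x (by simp) e' he' hxe')))
    · rcases hP7' x hx e' he' hxe' with h | h
      · exact Or.inl (Or.inr (Or.inr h))
      · by_cases he1 : e' = s(z,y')
        · exact Or.inl (Or.inr (Or.inl he1))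
        · exact Or.inr (fun hF => h (Finset.mem_erase.mpr ⟨he1, hF⟩))
  · have hlen : (Walk.cons hadj (Walk.cons hadj2 p')).length = p'.length + 2 := by
      simp [Walk.length_cons]
    rcases hout' with ⟨hev, hw⟩ | hod
    · exact Or.inl ⟨by omega, hw⟩
    · exact Or.inr (by omega)



lemma extract {V : Type*} [Fintype V] [DecidableEq V] (G : SimpleGraph V)
    (M M' : Finset (Sym2 V))
    (hMG : ∀ e ∈ M, e ∈ G.edgeSet) (hM'G : ∀ e ∈ M', e ∈ G.edgeSet)
    (hM : ∀ e ∈ M, ∀ f ∈ M, e ≠ f → ∀ x, x ∈ e → x ∉ f)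
    (hM' : ∀ e ∈ M', ∀ f ∈ M', e ≠ f → ∀ x, x ∈ e → x ∉ f)
    (htrace : ∀ (n : ℕ) (F' : Finset (Sym2 V)), F'.card ≤ n → (∀ e ∈ F', e ∈ M' ∧ e ∉ M) →
      ∀ (S : Finset V) (y : V), y ∉ S →
      (∀ x ∈ S, ∀ e ∈ M, x ∈ e → ∀ z ∈ e, z ∈ S) →
      (∀ x ∈ S, ∀ e ∈ M', x ∈ e → ∀ z ∈ e, z ∈ S ∨ z = y) →
      (∀ e ∈ F', y ∉ e) →
      (∀ e ∈ M, y ∈ e → e ∉ M') →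
      (∀ e ∈ M', y ∈ e → ∀ z ∈ e, z ∈ S ∨ z = y) →
      ∃ (w : V) (p : G.Walk y w),
        p.IsPath ∧
        (∀ x ∈ p.support, x ∉ S) ∧
        (∀ i (hi : i < p.edges.length),
          if i % 2 = 0 then p.edges.get ⟨i, hi⟩ ∈ M ∧ p.edges.get ⟨i, hi⟩ ∉ M'
          else p.edges.get ⟨i, hi⟩ ∈ F') ∧
        (∀ x ∈ p.support, ∀ e ∈ M, x ∈ e → e ∈ p.edges) ∧
        (∀ x ∈ p.support, ∀ e ∈ M', x ∈ e → e ∈ p.edges ∨ e ∉ F') ∧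
        (p.length % 2 = 0 ∧ (∀ e ∈ M, w ∉ e) ∨ p.length % 2 = 1))
    (v y0 : V) (he0 : s(v,y0) ∈ M') (he0M : s(v,y0) ∉ M) (hv : ∀ e ∈ M, v ∉ e) :
    ∃ (w : V) (P : G.Walk v w), P.IsPath ∧ 1 ≤ P.length ∧
      (∀ i (hi : i < P.edges.length),
        if i % 2 = 0 then P.edges.get ⟨i,hi⟩ ∈ M' \ M else P.edges.get ⟨i,hi⟩ ∈ M \ M') ∧
      (∀ x ∈ P.support, ∀ e ∈ M, x ∈ e → e ∈ P.edges) ∧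
      (∀ x ∈ P.support, ∀ e ∈ M', x ∈ e → e ∈ P.edges) ∧
      ((P.length % 2 = 1 ∧ ∀ e ∈ M, w ∉ e) ∨ P.length % 2 = 0) := by
  have hvy0 : v ≠ y0 := by
    have := G.not_isDiag_of_mem_edgeSet (hM'G _ he0)
    simpa [Sym2.mk_isDiag_iff] using this
  have hadj0 : G.Adj v y0 := (G.mem_edgeSet).mp (hM'G _ he0)
  have huniqM' : ∀ x, x ∈ (s(v,y0) : Sym2 V) → ∀ f ∈ M', x ∈ f → f = s(v,y0) := by
    intro x hxe f hf hxf
    by_contra hne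
    exact hM' f hf _ he0 hne x hxf hxe
  set F' : Finset (Sym2 V) := (M' \ M).erase s(v,y0) with hF'def
  obtain ⟨w, p', hpath', hsupS', halt', hP6', hP7', hout'⟩ :=
    htrace F'.card F' le_rfl
      (fun e he => by
        have := Finset.mem_of_mem_erase he
        exact ⟨(Finset.mem_sdiff.mp this).1, (Finset.mem_sdiff.mp this).2⟩)
      {v} y0 (by simp [Ne.symm hvy0])
      (by intro x hx e he hxe z hz
          simp only [Finset.mem_singleton] at hx; subst hx
          exact absurd hxe (hv e he))
      (by intro x hx e he hxe z hz
          simp only [Finset.mem_singleton] at hx; subst hx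
          have := huniqM' x (by simp) e he hxe
          subst this
          rcases Sym2.mem_iff.mp hz with rfl | rfl
          · exact Or.inl (by simp)
          · exact Or.inr rfl)
      (by intro e heF hy0e
          have heM' : e ∈ M' := (Finset.mem_sdiff.mp (Finset.mem_of_mem_erase heF)).1
          have := huniqM' y0 (by simp) e heM' hy0e
          subst this
          exact (Finset.notMem_erase _ _) heF)
      (by intro e heM hy0e heM'
          have := huniqM' y0 (by simp) e heM' hy0e
          subst this
          exact he0M heM)
      (by intro e heM' hy0e z hz
          have := huniqM' y0 (by simp) e heM' hy0e
          subst this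
          rcases Sym2.mem_iff.mp hz with rfl | rfl
          · exact Or.inl (by simp)
          · exact Or.inr rfl)
  have hvnp' : v ∉ p'.support := fun h => hsupS' v h (by simp)
  refine ⟨w, Walk.cons hadj0 p', ?_, by simp [Walk.length_cons], ?_, ?_, ?_, ?_⟩
  · rw [Walk.cons_isPath_iff]; exact ⟨hpath', hvnp'⟩
  · intro i hi
    simp only [Walk.edges_cons] at hi ⊢
    match i with
    | 0 => simpa using Finset.mem_sdiff.mpr ⟨he0, he0M⟩
    | (i+1) =>
      have hi' : i < p'.edges.length := by simpa [List.length_cons] using hi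
      have := halt' i hi'
      simp only [List.get_eq_getElem, List.getElem_cons_succ]
      rcases Nat.even_or_odd i with hev | hod
      · have h0 : i % 2 = 0 := Nat.even_iff.mp hev
        rw [if_neg (by omega)]
        rw [if_pos h0] at this
        have h2 : p'.edges[i] ∈ M ∧ p'.edges[i] ∉ M' := by
          simpa [List.get_eq_getElem] using this
        exact Finset.mem_sdiff.mpr ⟨h2.1, h2.2⟩
      · have h1 : i % 2 = 1 := Nat.odd_iff.mp hod
        rw [if_pos (by omega)]
        rw [if_neg (by omega)] at this
        have : p'.edges[i] ∈ F' := by simpa [List.get_eq_getElem] using this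
        have hm := Finset.mem_sdiff.mp (Finset.mem_of_mem_erase this)
        exact Finset.mem_sdiff.mpr hm
  · intro x hx e he hxe
    simp only [Walk.support_cons, List.mem_cons, Walk.edges_cons] at hx ⊢
    rcases hx with rfl | hx
    · exact absurd hxe (hv e he)
    · exact Or.inr (hP6' x hx e he hxe)
  · intro x hx e he hxe
    simp only [Walk.support_cons, List.mem_cons, Walk.edges_cons] at hx ⊢
    rcases hx with rfl | hx
    · exact Or.inl (huniqM' x (by simp) e he hxe)
    · rcases hP7' x hx e he hxe with h | h
      · exact Or.inr h
      · by_cases he0' : e = s(v,y0)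
        · exact Or.inl he0'
        · have heM : e ∈ M := by
            by_contra heM
            exact h (Finset.mem_erase.mpr ⟨he0', Finset.mem_sdiff.mpr ⟨he, heM⟩⟩)
          exact Or.inr (hP6' x hx e heM hxe)
  · have hlen : (Walk.cons hadj0 p').length = p'.length + 1 := by simp [Walk.length_cons]
    rcases hout' with ⟨hev, hw⟩ | hod
    · exact Or.inl ⟨by omega, hw⟩
    · exact Or.inr (by omega)

lemma aux_main {V : Type*} [Fintype V] [DecidableEq V] (G : SimpleGraph V) :
    ∀ (n : ℕ) (M M' : Finset (Sym2 V)), M'.card ≤ n →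
    (∀ e ∈ M, e ∈ G.edgeSet) → (∀ e ∈ M', e ∈ G.edgeSet) →
    (∀ e ∈ M, ∀ f ∈ M, e ≠ f → ∀ x, x ∈ e → x ∉ f) →
    (∀ e ∈ M', ∀ f ∈ M', e ≠ f → ∀ x, x ∈ e → x ∉ f) →
    ∀ (k : ℕ), M'.card = M.card + k →
    ∃ (u w : Fin k → V) (p : ∀ j, G.Walk (u j) (w j)),
      (∀ j, (p j).IsPath) ∧
      (∀ j, ∀ e ∈ (p j).edges, e ∈ symmDiff M M') ∧
      (∀ j, (p j).length % 2 = 1) ∧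
      (∀ j, ∀ i, ∀ hi : i < (p j).edges.length,
        if i % 2 = 0 then (p j).edges.get ⟨i, hi⟩ ∈ M' \ M
        else (p j).edges.get ⟨i, hi⟩ ∈ M \ M') ∧
      (∀ j, ∀ e ∈ M, u j ∉ e ∧ w j ∉ e) ∧
      (∀ j j', j ≠ j' → ∀ x ∈ (p j).support, x ∉ (p j').support) ∧
      (∑ j, (p j).length) ≤ M.card + M'.card := by
  intro n
  induction n using Nat.strong_induction_on with
  | _ n IH =>
  intro M M' hn hMG hM'G hM hM' k hcard
  obtain _ | k' := k
  · exact ⟨fun j => (Nat.not_lt_zero _ j.2).elim, fun j => (Nat.not_lt_zero _ j.2).elim,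
      fun j => (Nat.not_lt_zero _ j.2).elim,
      fun j => (Nat.not_lt_zero _ j.2).elim, fun j => (Nat.not_lt_zero _ j.2).elim,
      fun j => (Nat.not_lt_zero _ j.2).elim, fun j => (Nat.not_lt_zero _ j.2).elim,
      fun j => (Nat.not_lt_zero _ j.2).elim, fun j => (Nat.not_lt_zero _ j.2).elim,
      by simp⟩
  have hlt : M.card < M'.card := by omega
  obtain ⟨v, y0, he0, he0M, hv⟩ := exists_start G M M' hMG hM'G hM hM' hlt
  obtain ⟨w0, P, hPpath, hPlen1, hPalt, hPcovM, hPcovM', hPout⟩ :=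
    extract G M M' hMG hM'G hM hM' (trace G M M' hMG hM'G hM hM') v y0 he0 he0M hv
  set R : Finset (Sym2 V) := P.edges.toFinset with hRdef
  have hnd : P.edges.Nodup := hPpath.isTrail.edges_nodup
  have hedlen : P.edges.length = P.length := P.length_edges
  have hM'R : (M' ∩ R).card = (P.length + 1) / 2 := by
    have hh : ∀ i (hi : i < P.edges.length),
        P.edges.get ⟨i, hi⟩ ∈ M' ↔ (i + 0) % 2 = 0 := by
      intro i hi
      have halti := hPalt i hi
      constructor
      · intro hmem
        by_contra hodd
        rw [if_neg (by omega)] at halti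
        exact (Finset.mem_sdiff.mp halti).2 hmem
      · intro hev
        rw [if_pos (by omega)] at halti
        exact (Finset.mem_sdiff.mp halti).1
    have := count_helper P.edges hnd M' 0 hh
    simpa [hedlen] using this
  have hMR : (M ∩ R).card = P.length / 2 := by
    have hh : ∀ i (hi : i < P.edges.length),
        P.edges.get ⟨i, hi⟩ ∈ M ↔ (i + 1) % 2 = 0 := by
      intro i hi
      have halti := hPalt i hi
      constructor
      · intro hmem
        by_contra hodd
        rw [if_pos (by omega)] at halti
        exact (Finset.mem_sdiff.mp halti).2 hmem
      · intro hev
        rw [if_neg (by omega)] at halti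
        exact (Finset.mem_sdiff.mp halti).1
    have := count_helper P.edges hnd M 1 hh
    simpa [hedlen] using this
  set M2 := M \ R with hM2def
  set M2' := M' \ R with hM2'def
  have hcardM2 : M2.card + (M ∩ R).card = M.card := by
    rw [hM2def, add_comm]; exact Finset.card_inter_add_card_sdiff M R
  have hcardM2' : M2'.card + (M' ∩ R).card = M'.card := by
    rw [hM2'def, add_comm]; exact Finset.card_inter_add_card_sdiff M' R
  have hiso : ∀ x ∈ P.support, ∀ e, (e ∈ M2 ∨ e ∈ M2') → x ∉ e := by
    intro x hx e he hxe
    rcases he with he | he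
    · exact (Finset.mem_sdiff.mp he).2
        (List.mem_toFinset.mpr (hPcovM x hx e (Finset.mem_sdiff.mp he).1 hxe))
    · exact (Finset.mem_sdiff.mp he).2
        (List.mem_toFinset.mpr (hPcovM' x hx e (Finset.mem_sdiff.mp he).1 hxe))
  have hend : ∀ e ∈ P.edges, ∀ x, x ∈ e → x ∈ P.support := by
    intro e he x hx
    obtain ⟨c, rfl⟩ := Sym2.mem_iff_exists.mp hx
    exact P.fst_mem_support_of_mem_edges he
  have hsubM2' : ∀ e, e ∈ M2' \ M2 → e ∈ M' \ M := by
    intro e he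
    rw [Finset.mem_sdiff] at he ⊢
    obtain ⟨h1, h2⟩ := he
    rw [hM2'def, Finset.mem_sdiff] at h1
    exact ⟨h1.1, fun heM => h2 (by rw [hM2def, Finset.mem_sdiff]; exact ⟨heM, h1.2⟩)⟩
  have hsubM2 : ∀ e, e ∈ M2 \ M2' → e ∈ M \ M' := by
    intro e he
    rw [Finset.mem_sdiff] at he ⊢
    obtain ⟨h1, h2⟩ := he
    rw [hM2def, Finset.mem_sdiff] at h1
    exact ⟨h1.1, fun heM => h2 (by rw [hM2'def, Finset.mem_sdiff]; exact ⟨heM, h1.2⟩)⟩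
  have hsymmsub : ∀ e, e ∈ symmDiff M2 M2' → e ∈ symmDiff M M' := by
    intro e he
    rw [Finset.mem_symmDiff] at he ⊢
    rcases he with ⟨h1, h2⟩ | ⟨h1, h2⟩
    · have := hsubM2 e (Finset.mem_sdiff.mpr ⟨h1, h2⟩)
      rw [Finset.mem_sdiff] at this
      exact Or.inl this
    · have := hsubM2' e (Finset.mem_sdiff.mpr ⟨h1, h2⟩)
      rw [Finset.mem_sdiff] at this
      exact Or.inr this
  have hMG2 : ∀ e ∈ M2, e ∈ G.edgeSet := fun e he => hMG e (Finset.mem_sdiff.mp he).1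
  have hM'G2 : ∀ e ∈ M2', e ∈ G.edgeSet := fun e he => hM'G e (Finset.mem_sdiff.mp he).1
  have hM2m : ∀ e ∈ M2, ∀ f ∈ M2, e ≠ f → ∀ x, x ∈ e → x ∉ f := fun e he f hf =>
    hM e (Finset.mem_sdiff.mp he).1 f (Finset.mem_sdiff.mp hf).1
  have hM2'm : ∀ e ∈ M2', ∀ f ∈ M2', e ≠ f → ∀ x, x ∈ e → x ∉ f := fun e he f hf =>
    hM' e (Finset.mem_sdiff.mp he).1 f (Finset.mem_sdiff.mp hf).1
  have hRM : (M ∩ R).card ≤ M.card := by omega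
  have hRM' : (M' ∩ R).card ≤ M'.card := by omega
  have ht1 : 1 ≤ (M' ∩ R).card := by rw [hM'R]; omega
  rcases hPout with ⟨hodd, hw0⟩ | heven
  · -- augmenting case
    have hM2'card : M2'.card = M2.card + k' := by omega
    obtain ⟨u, w, p, c1, c2, c3, c4, c5, c6, c7⟩ :=
      IH M2'.card (by omega) M2 M2' le_rfl hMG2 hM'G2 hM2m hM2'm k' hM2'card
    have hdisj : ∀ j, ∀ x ∈ (p j).support, x ∉ P.support := by
      intro j x hx hxP
      have hlenj : (p j).length ≠ 0 := by have := c3 j; omega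
      obtain ⟨e, he, hxe⟩ := support_exists_edge (p j) hlenj x hx
      have h2 := c2 j e he
      rw [Finset.mem_symmDiff] at h2
      rcases h2 with ⟨h1, _⟩ | ⟨h1, _⟩
      · exact hiso x hxP e (Or.inl h1) hxe
      · exact hiso x hxP e (Or.inr h1) hxe
    have hnomatch : ∀ x, (∀ f ∈ M2, x ∉ f) → x ∉ P.support → ∀ e ∈ M, x ∉ e := by
      intro x hx1 hx2 e heM hxe
      by_cases h2 : e ∈ M2
      · exact hx1 e h2 hxe
      · have heR : e ∈ R := by
          by_contra h3
          exact h2 (Finset.mem_sdiff.mpr ⟨heM, h3⟩)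
        exact hx2 (hend e (List.mem_toFinset.mp heR) x hxe)
    set F : Fin (k'+1) → (a : V) × (b : V) × G.Walk a b :=
      Fin.cons ⟨v, w0, P⟩ (fun i => ⟨u i, w i, p i⟩) with hFdef
    have hF0 : F 0 = ⟨v, w0, P⟩ := by rw [hFdef]; exact Fin.cons_zero _ _
    have hFs : ∀ i : Fin k', F i.succ = ⟨u i, w i, p i⟩ := by
      intro i; rw [hFdef]; exact Fin.cons_succ _ _ _
    refine ⟨fun j => (F j).1, fun j => (F j).2.1, fun j => (F j).2.2, ?_, ?_, ?_, ?_, ?_, ?_, ?_⟩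
    · intro j
      rcases Fin.eq_zero_or_eq_succ j with rfl | ⟨i, rfl⟩
      · simp only [hF0]; exact hPpath
      · simp only [hFs]; exact c1 i
    · intro j
      rcases Fin.eq_zero_or_eq_succ j with rfl | ⟨i, rfl⟩
      · simp only [hF0]
        intro e he
        obtain ⟨⟨i, hi⟩, rfl⟩ := List.mem_iff_get.mp he
        have halti := hPalt i hi
        rw [Finset.mem_symmDiff]
        rcases Nat.even_or_odd i with hev | hod
        · rw [if_pos (Nat.even_iff.mp hev)] at halti
          rw [Finset.mem_sdiff] at halti
          exact Or.inr halti
        · rw [if_neg (by simpa using Nat.odd_iff.mp hod : ¬ i % 2 = 0)] at halti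
          rw [Finset.mem_sdiff] at halti
          exact Or.inl halti
      · simp only [hFs]
        exact fun e he => hsymmsub e (c2 i e he)
    · intro j
      rcases Fin.eq_zero_or_eq_succ j with rfl | ⟨i, rfl⟩
      · simp only [hF0]; exact hodd
      · simp only [hFs]; exact c3 i
    · intro j
      rcases Fin.eq_zero_or_eq_succ j with rfl | ⟨i, rfl⟩
      · simp only [hF0]; exact hPalt
      · simp only [hFs]
        intro i' hi'
        have := c4 i i' hi'
        rcases Nat.even_or_odd i' with hev | hod
        · rw [if_pos (Nat.even_iff.mp hev)] at this ⊢
          exact hsubM2' _ this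
        · rw [if_neg (by simpa using Nat.odd_iff.mp hod : ¬ i' % 2 = 0)] at this ⊢
          exact hsubM2 _ this
    · intro j
      rcases Fin.eq_zero_or_eq_succ j with rfl | ⟨i, rfl⟩
      · simp only [hF0]
        exact fun e he => ⟨hv e he, hw0 e he⟩
      · simp only [hFs]
        intro e he
        constructor
        · exact hnomatch (u i) (fun f hf => (c5 i f hf).1)
            (hdisj i (u i) (p i).start_mem_support) e he
        · exact hnomatch (w i) (fun f hf => (c5 i f hf).2)
            (hdisj i (w i) (p i).end_mem_support) e he
    · intro j j' hne x
      rcases Fin.eq_zero_or_eq_succ j with rfl | ⟨i, rfl⟩ <;>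
        rcases Fin.eq_zero_or_eq_succ j' with rfl | ⟨i', rfl⟩
      · exact absurd rfl hne
      · simp only [hF0, hFs]
        exact fun hx hx' => hdisj i' x hx' hx
      · simp only [hF0, hFs]
        exact fun hx hx' => hdisj i x hx hx'
      · simp only [hFs]
        exact c6 i i' (fun h => hne (congrArg Fin.succ h)) x
    · have h2 : ∀ i : Fin k', ((F i.succ).snd.snd).length = (p i).length :=
        fun i => by rw [hFs]
      have h0 : ((F 0).snd.snd).length = P.length := by rw [hF0]
      have hsum : (∑ j : Fin (k'+1), ((F j).snd.snd).length)
          = P.length + ∑ i : Fin k', (p i).length := by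
        rw [Fin.sum_univ_succ, h0]
        exact congrArg (P.length + ·) (Finset.sum_congr rfl (fun i _ => h2 i))
      rw [hsum]
      omega
  · -- even case
    have hM2'card : M2'.card = M2.card + (k'+1) := by omega
    obtain ⟨u, w, p, c1, c2, c3, c4, c5, c6, c7⟩ :=
      IH M2'.card (by omega) M2 M2' le_rfl hMG2 hM'G2 hM2m hM2'm (k'+1) hM2'card
    have hdisj : ∀ j, ∀ x ∈ (p j).support, x ∉ P.support := by
      intro j x hx hxP
      have hlenj : (p j).length ≠ 0 := by have := c3 j; omega
      obtain ⟨e, he, hxe⟩ := support_exists_edge (p j) hlenj x hx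
      have h2 := c2 j e he
      rw [Finset.mem_symmDiff] at h2
      rcases h2 with ⟨h1, _⟩ | ⟨h1, _⟩
      · exact hiso x hxP e (Or.inl h1) hxe
      · exact hiso x hxP e (Or.inr h1) hxe
    have hnomatch : ∀ x, (∀ f ∈ M2, x ∉ f) → x ∉ P.support → ∀ e ∈ M, x ∉ e := by
      intro x hx1 hx2 e heM hxe
      by_cases h2 : e ∈ M2
      · exact hx1 e h2 hxe
      · have heR : e ∈ R := by
          by_contra h3
          exact h2 (Finset.mem_sdiff.mpr ⟨heM, h3⟩)
        exact hx2 (hend e (List.mem_toFinset.mp heR) x hxe)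
    refine ⟨u, w, p, c1, ?_, c3, ?_, ?_, c6, ?_⟩
    · exact fun j e he => hsymmsub e (c2 j e he)
    · intro j i' hi'
      have := c4 j i' hi'
      rcases Nat.even_or_odd i' with hev | hod
      · rw [if_pos (Nat.even_iff.mp hev)] at this ⊢
        exact hsubM2' _ this
      · rw [if_neg (by simpa using Nat.odd_iff.mp hod : ¬ i' % 2 = 0)] at this ⊢
        exact hsubM2 _ this
    · intro j e he
      constructor
      · exact hnomatch (u j) (fun f hf => (c5 j f hf).1)
          (hdisj j (u j) (p j).start_mem_support) e he
      · exact hnomatch (w j) (fun f hf => (c5 j f hf).2)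
          (hdisj j (w j) (p j).end_mem_support) e he
    · omega

end AugAux


/-- Let `M` and `M'` be matchings (sets of pairwise vertex-disjoint edges) in a finite graph `G`
with `|M'| = |M| + k`, `k ≥ 1`.  Then the symmetric difference `M ∆ M'` contains at least `k`
pairwise vertex-disjoint `M`-augmenting paths — paths whose edges alternate between `M' \ M` and
`M \ M'`, beginning and ending with edges of `M'` (so of odd length), whose endpoints are
unmatched by `M` — and the total number of edges on these paths is at most `|M| + |M'|`. -/
theorem augmenting_paths_in_symmDiff {V : Type*} [Fintype V] [DecidableEq V]
    (G : SimpleGraph V) (M M' : Finset (Sym2 V))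
    (hMG : ∀ e ∈ M, e ∈ G.edgeSet) (hM'G : ∀ e ∈ M', e ∈ G.edgeSet)
    (hM : ∀ e ∈ M, ∀ f ∈ M, e ≠ f → ∀ x, x ∈ e → x ∉ f)
    (hM' : ∀ e ∈ M', ∀ f ∈ M', e ≠ f → ∀ x, x ∈ e → x ∉ f)
    (k : ℕ) (hk : 1 ≤ k) (hcard : M'.card = M.card + k) :
    ∃ (u w : Fin k → V) (p : ∀ j, G.Walk (u j) (w j)),
      (∀ j, (p j).IsPath) ∧
      (∀ j, ∀ e ∈ (p j).edges, e ∈ symmDiff M M') ∧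
      (∀ j, (p j).length % 2 = 1) ∧
      (∀ j, ∀ i, ∀ hi : i < (p j).edges.length,
        if i % 2 = 0 then (p j).edges.get ⟨i, hi⟩ ∈ M' \ M
        else (p j).edges.get ⟨i, hi⟩ ∈ M \ M') ∧
      (∀ j, ∀ e ∈ M, u j ∉ e ∧ w j ∉ e) ∧
      (∀ j j', j ≠ j' → ∀ x ∈ (p j).support, x ∉ (p j').support) ∧
      (∑ j, (p j).length) ≤ M.card + M'.card := by
  exact aux_main G M'.card M M' le_rfl hMG hM'G hM hM' k hcard
end

section
/- Let (V, d) be a finite metric space and R ⊆ V a nonempty set of terminals. Define the cost of a tree whose vertex set is a subset of V as the sum of d(u, w) over its edges. Then the minimum cost of a spanning tree of the complete graph on R (with edge costs d) is at most twice the minimum cost of a Steiner tree for R, i.e., at most twice the minimum over all S with R ⊆ S ⊆ V of the minimum cost of a spanning tree of the complete graph on S. -/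
/-- The cost of a set of edges over a metric space: the sum of the distances `d(u,w)` over its
edges. -/
noncomputable def treeCost {V : Type*} [MetricSpace V] (T : Finset (Sym2 V)) : ℝ :=
  ∑ e ∈ T, Sym2.lift ⟨fun a b => dist a b, fun a b => dist_comm a b⟩ e

/-- `T` is (the edge set of) a spanning tree of the complete graph on the vertex set `S`:
its edges have both endpoints in `S`, it is acyclic, and it connects every two vertices of
`S`. -/
def IsSpanningTreeOn {V : Type*} (S : Finset V) (T : Finset (Sym2 V)) : Prop :=
  (∀ e ∈ T, ∀ x ∈ e, x ∈ S) ∧ (SimpleGraph.fromEdgeSet (↑T : Set (Sym2 V))).IsAcyclic ∧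
    ∀ u ∈ S, ∀ w ∈ S, (SimpleGraph.fromEdgeSet (↑T : Set (Sym2 V))).Reachable u w

/-- The minimum cost of a spanning tree of the complete graph (with edge costs given by the
metric) on the vertex set `S`. -/
noncomputable def mstCost (V : Type*) [MetricSpace V] (S : Finset V) : ℝ :=
  sInf { c : ℝ | ∃ T : Finset (Sym2 V), IsSpanningTreeOn S T ∧ c = treeCost T }

namespace SteinerAux

variable {V : Type*} [MetricSpace V]

noncomputable def pathCost : List V → ℝ
  | [] => 0
  | [_] => 0
  | a :: b :: t => dist a b + pathCost (b :: t)

noncomputable def cycCost : List V → ℝ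
  | [] => 0
  | a :: t => pathCost (a :: (t ++ [a]))

@[simp] lemma pathCost_nil : pathCost ([] : List V) = 0 := rfl
@[simp] lemma pathCost_single (a : V) : pathCost [a] = 0 := rfl
lemma pathCost_cons_cons (a b : V) (t : List V) :
    pathCost (a :: b :: t) = dist a b + pathCost (b :: t) := rfl

lemma pathCost_nonneg (l : List V) : 0 ≤ pathCost l := by
  induction l with
  | nil => simp
  | cons a t ih =>
    cases t with
    | nil => simp
    | cons b t' =>
      rw [pathCost_cons_cons]
      have := dist_nonneg (x := a) (y := b)
      linarith

lemma pathCost_append_cons (l : List V) (b : V) (s : List V) :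
    pathCost (l ++ b :: s) = pathCost (l ++ [b]) + pathCost (b :: s) := by
  induction l with
  | nil => simp
  | cons a t ih =>
    cases t with
    | nil => simp [pathCost_cons_cons]
    | cons c t' =>
      simp only [List.cons_append, pathCost_cons_cons] at *
      linarith

lemma pathCost_le_insert (l : List V) (a : V) (r : List V) :
    pathCost (l ++ r) ≤ pathCost (l ++ a :: r) := by
  induction l with
  | nil =>
    cases r with
    | nil => simp
    | cons b r' =>
      simp only [List.nil_append, pathCost_cons_cons]
      have := dist_nonneg (x := a) (y := b)
      linarith
  | cons c t ih =>
    cases t with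
    | nil =>
      cases r with
      | nil =>
        simp only [List.cons_append, List.nil_append, pathCost_cons_cons, pathCost_single,
          pathCost_nil]
        have := dist_nonneg (x := c) (y := a)
        linarith
      | cons b r' =>
        simp only [List.cons_append, List.nil_append, pathCost_cons_cons]
        have h1 := dist_triangle c a b
        linarith
    | cons c' t' =>
      simp only [List.cons_append, pathCost_cons_cons] at *
      linarith

lemma pathCost_le_concat (l : List V) (c : V) :
    pathCost l ≤ pathCost (l ++ [c]) := by
  have := pathCost_le_insert l c ([] : List V)
  simpa using this

@[simp] lemma cycCost_nil : cycCost ([] : List V) = 0 := rfl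
lemma cycCost_cons (a : V) (t : List V) : cycCost (a :: t) = pathCost (a :: (t ++ [a])) := rfl

@[simp] lemma cycCost_single (a : V) : cycCost [a] = 0 := by
  simp [cycCost_cons, pathCost_cons_cons]

lemma cycCost_nonneg (l : List V) : 0 ≤ cycCost l := by
  cases l with
  | nil => simp
  | cons a t => exact (cycCost_cons a t) ▸ pathCost_nonneg _

lemma pathCost_le_cycCost (l : List V) : pathCost l ≤ cycCost l := by
  cases l with
  | nil => simp
  | cons a t =>
    rw [cycCost_cons]
    have := pathCost_le_concat (a :: t) a
    simpa using this

lemma cycCost_rotate (A B : List V) : cycCost (A ++ B) = cycCost (B ++ A) := by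
  cases A with
  | nil => simp
  | cons a A' =>
    cases B with
    | nil => simp
    | cons b B' =>
      have h1 := pathCost_append_cons (a :: A') b (B' ++ [a])
      have h2 := pathCost_append_cons (b :: B') a (A' ++ [b])
      rw [show ((a :: A') ++ b :: B' : List V) = a :: (A' ++ b :: B') from rfl, cycCost_cons,
        show ((b :: B') ++ a :: A' : List V) = b :: (B' ++ a :: A') from rfl, cycCost_cons]
      simp only [List.cons_append, List.append_assoc, List.nil_append, List.append_nil,
        List.singleton_append] at h1 h2 ⊢
      linarith

lemma cycCost_drop_head (v : V) (t : List V) : cycCost t ≤ cycCost (v :: t) := by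
  cases t with
  | nil => simp [cycCost_nonneg]
  | cons a t' =>
    rw [cycCost_cons, cycCost_cons]
    have h1 := pathCost_le_insert (a :: t') v [a]
    have h2 := pathCost_append_cons (a :: t') v [a]
    have h3 := dist_comm v a
    simp only [List.cons_append, List.append_assoc, List.nil_append, List.append_nil,
      List.singleton_append, pathCost_cons_cons, pathCost_single, pathCost_nil] at h1 h2 ⊢
    linarith

lemma cycCost_splice (x y : V) (B A : List V) :
    cycCost (x :: ((y :: B) ++ A)) ≤ cycCost (x :: A) + cycCost (y :: B) + 2 * dist x y := by
  have hyx := dist_comm y x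
  cases A with
  | nil =>
    have h1 := pathCost_le_insert (y :: B) y [x]
    have h2 := pathCost_append_cons (y :: B) y [x]
    rw [show (x :: ((y :: B) ++ []) : List V) = x :: (y :: B) by simp, cycCost_cons,
      cycCost_cons, cycCost_cons]
    simp only [List.cons_append, List.append_assoc, List.nil_append, List.append_nil,
      List.singleton_append, pathCost_cons_cons, pathCost_single, pathCost_nil, dist_self] at h1 h2 ⊢
    linarith
  | cons a A' =>
    have h0 := pathCost_append_cons (y :: B) a (A' ++ [x])
    have h1 := pathCost_le_insert (y :: B) x [a]
    have h2 := pathCost_le_insert (y :: B) y (x :: [a])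
    have h3 := pathCost_append_cons (y :: B) y (x :: [a])
    rw [show (x :: ((y :: B) ++ a :: A') : List V) = x :: (y :: (B ++ a :: A')) from rfl,
      cycCost_cons, cycCost_cons, cycCost_cons]
    simp only [List.cons_append, List.append_assoc, List.nil_append, List.append_nil,
      List.singleton_append, pathCost_cons_cons, pathCost_single, pathCost_nil] at h0 h1 h2 h3 ⊢
    linarith

/-! ### permutation helpers -/

lemma perm_toFinset_eq {α : Type*} [DecidableEq α] {l₁ l₂ : List α} (h : List.Perm l₁ l₂) :
    l₁.toFinset = l₂.toFinset := by
  ext a; simp [List.mem_toFinset, h.mem_iff]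

/-! ### shortcut lemma -/

lemma cycCost_shortcut [DecidableEq V] (R : Finset V) (r : V) (hr : r ∈ R) :
    ∀ (n : ℕ) (t : List V), t.length ≤ n → (r :: t).Nodup → R ⊆ (r :: t).toFinset →
    ∃ t' : List V, (r :: t').Nodup ∧ (r :: t').toFinset = R ∧
      cycCost (r :: t') ≤ cycCost (r :: t) := by
  intro n
  induction n with
  | zero =>
    intro t ht hnd hsub
    have ht0 : t = [] := List.length_eq_zero_iff.mp (Nat.le_zero.mp ht)
    subst ht0
    refine ⟨[], hnd, ?_, le_refl _⟩
    apply Finset.Subset.antisymm _ hsub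
    intro a ha
    simp only [List.toFinset_cons, List.toFinset_nil, LawfulSingleton.insert_empty_eq,
      Finset.mem_singleton] at ha
    subst ha; exact hr
  | succ n ih =>
    intro t ht hnd hsub
    by_cases heq : (r :: t).toFinset = R
    · exact ⟨t, hnd, heq, le_refl _⟩
    · -- there is a vertex in the list not in R
      have hex : ∃ v ∈ t, v ∉ R := by
        by_contra hcon
        push_neg at hcon
        apply heq
        apply Finset.Subset.antisymm _ hsub
        intro a ha
        simp only [List.mem_toFinset, List.mem_cons] at ha
        rcases ha with rfl | ha
        · exact hr
        · exact hcon a ha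
      obtain ⟨v, hvt, hvR⟩ := hex
      obtain ⟨A, B, rfl⟩ := List.append_of_mem hvt
      -- remove v
      have hlen : (A ++ B).length ≤ n := by
        have := ht
        simp only [List.length_append, List.length_cons] at this ⊢
        omega
      have hsl : List.Sublist (r :: (A ++ B)) (r :: (A ++ v :: B)) := by
        apply List.Sublist.cons₂
        exact List.Sublist.append_left (List.sublist_cons_self v B) A
      have hnd' : (r :: (A ++ B)).Nodup := hnd.sublist hsl
      have hsub' : R ⊆ (r :: (A ++ B)).toFinset := by
        intro a ha
        have h1 := hsub ha
        have hav : a ≠ v := fun h => hvR (h ▸ ha)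
        simp only [List.mem_toFinset, List.mem_cons, List.mem_append] at h1 ⊢
        rcases h1 with rfl | h1 | h1
        · exact Or.inl rfl
        · exact Or.inr (Or.inl h1)
        · rcases h1 with rfl | h1
          · exact absurd rfl hav
          · exact Or.inr (Or.inr h1)
      obtain ⟨t', h1, h2, h3⟩ := ih (A ++ B) hlen hnd' hsub'
      refine ⟨t', h1, h2, h3.trans ?_⟩
      -- cycCost (r :: (A ++ B)) ≤ cycCost (r :: (A ++ v :: B))
      have e1 : (r :: (A ++ B) : List V) = (r :: A) ++ B := by simp
      have e2 : (r :: (A ++ v :: B) : List V) = (r :: A) ++ (v :: B) := by simp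
      rw [e1, e2, cycCost_rotate (r :: A) (v :: B), cycCost_rotate (r :: A) B]
      have e3 : ((v :: B) ++ r :: A : List V) = v :: (B ++ r :: A) := rfl
      rw [e3]
      exact cycCost_drop_head v (B ++ r :: A)

/-! ### graph lemmas -/

open SimpleGraph

lemma adj_erase [DecidableEq V] (T : Finset (Sym2 V)) (e : Sym2 V) (a b : V) :
    (fromEdgeSet (↑(T.erase e) : Set (Sym2 V))).Adj a b ↔
      (fromEdgeSet (↑T : Set (Sym2 V))).Adj a b ∧ s(a, b) ≠ e := by
  simp only [fromEdgeSet_adj, Finset.coe_erase, Set.mem_diff, Finset.mem_coe,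
    Set.mem_singleton_iff]
  tauto

lemma fromEdgeSet_erase_eq [DecidableEq V] (T : Finset (Sym2 V)) (e : Sym2 V) :
    fromEdgeSet (↑(T.erase e) : Set (Sym2 V)) =
      fromEdgeSet (↑T : Set (Sym2 V)) \ fromEdgeSet {e} := by
  ext a b
  rw [adj_erase]
  simp only [sdiff_adj, fromEdgeSet_adj, Set.mem_singleton_iff]
  constructor
  · rintro ⟨⟨h1, h2⟩, h3⟩; exact ⟨⟨h1, h2⟩, fun h => h3 h.1⟩
  · rintro ⟨⟨h1, h2⟩, h3⟩; exact ⟨⟨h1, h2⟩, fun h => h3 ⟨h, h2⟩⟩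

lemma acyclic_mono {G H : SimpleGraph V} (h : H ≤ G) (hG : G.IsAcyclic) : H.IsAcyclic :=
  fun _ c hc => hG (c.mapLe h) (hc.mapLe h)

lemma walk_reach_or {G G' : SimpleGraph V} {x y : V}
    (h : ∀ a b, G.Adj a b → G'.Adj a b ∨ s(a, b) = s(x, y)) :
    ∀ {u v : V} (_ : G.Walk u v), v = x → (G'.Reachable x u ∨ G'.Reachable y u) := by
  intro u v w
  induction w with
  | nil => rintro rfl; exact Or.inl (Reachable.refl _)
  | @cons u b v hadj p ihp =>
    intro hv
    rcases h u b hadj with h' | he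
    · rcases ihp hv with hb | hb
      · exact Or.inl (hb.trans h'.symm.reachable)
      · exact Or.inr (hb.trans h'.symm.reachable)
    · rcases Sym2.eq_iff.mp he with ⟨rfl, rfl⟩ | ⟨rfl, rfl⟩
      · exact Or.inl (Reachable.refl _)
      · exact Or.inr (Reachable.refl _)

lemma reachable_patch {G G' : SimpleGraph V} {x y : V} (hxy : G'.Reachable x y)
    (h : ∀ a b, G.Adj a b → G'.Adj a b ∨ s(a, b) = s(x, y)) {u v : V}
    (hr : G.Reachable u v) : G'.Reachable u v := by
  obtain ⟨w⟩ := hr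
  induction w with
  | nil => exact Reachable.refl _
  | @cons u b v hadj p ihp =>
    rcases h u b hadj with h' | he
    · exact h'.reachable.trans ihp
    · rcases Sym2.eq_iff.mp he with ⟨rfl, rfl⟩ | ⟨rfl, rfl⟩
      · exact hxy.trans ihp
      · exact hxy.symm.trans ihp

/-! ### main induction: Euler tour of a Steiner tree -/

lemma claim [DecidableEq V] :
    ∀ (n : ℕ) (T : Finset (Sym2 V)) (S : Finset V) (x₀ : V),
      T.card ≤ n →
      (∀ e ∈ T, ∀ v ∈ e, v ∈ S) →
      (fromEdgeSet (↑T : Set (Sym2 V))).IsAcyclic →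
      (∀ u ∈ S, ∀ w ∈ S, (fromEdgeSet (↑T : Set (Sym2 V))).Reachable u w) →
      x₀ ∈ S →
      ∃ t : List V, (x₀ :: t).Nodup ∧ (x₀ :: t).toFinset = S ∧
        cycCost (x₀ :: t) ≤ 2 * treeCost T := by
  intro n
  induction n with
  | zero =>
    intro T S x₀ hcard hTS hac hconn hx₀
    have hT : T = ∅ := Finset.card_eq_zero.mp (Nat.le_zero.mp hcard)
    subst hT
    have hbot : fromEdgeSet ((↑(∅ : Finset (Sym2 V))) : Set (Sym2 V)) = ⊥ := by
      simp
    have hS : S = {x₀} := by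
      apply Finset.Subset.antisymm
      · intro u hu
        have h := hconn u hu x₀ hx₀
        rw [hbot, reachable_bot] at h
        simp [h]
      · intro u hu
        rw [Finset.mem_singleton] at hu
        subst hu; exact hx₀
    refine ⟨[], by simp, by simp [hS], ?_⟩
    have : treeCost (∅ : Finset (Sym2 V)) = 0 := by simp [treeCost]
    simp [this]
  | succ n IH =>
    intro T S x₀ hcard hTS hac hconn hx₀
    rcases Finset.eq_empty_or_nonempty T with rfl | hTne
    · exact IH ∅ S x₀ (by simp) hTS hac hconn hx₀
    by_cases hdiag : ∃ e ∈ T, e.IsDiag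
    · -- remove a loop edge, it contributes no cost and does not change the graph
      obtain ⟨e, he, hd⟩ := hdiag
      obtain ⟨c, rfl⟩ : ∃ c, e = s(c, c) := by
        revert he hd
        induction e using Sym2.ind with
        | _ a b =>
          intro he hd
          exact ⟨a, by rw [Sym2.mk_isDiag_iff.mp hd]⟩
      have hgeq : fromEdgeSet (↑(T.erase s(c, c)) : Set (Sym2 V))
          = fromEdgeSet (↑T : Set (Sym2 V)) := by
        ext a b
        rw [adj_erase]
        constructor
        · exact And.left
        · intro h
          refine ⟨h, fun hcontra => ?_⟩
          have hdiag' : (s(a, b) : Sym2 V).IsDiag := by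
            rw [hcontra]; exact Sym2.mk_isDiag_iff.mpr rfl
          exact h.ne (Sym2.mk_isDiag_iff.mp hdiag')
      have hcost : treeCost (T.erase s(c, c)) = treeCost T := by
        have h1 := Finset.add_sum_erase T
          (fun f => Sym2.lift ⟨fun a b => Dist.dist a b, fun a b => dist_comm a b⟩ f) he
        simp only [Sym2.lift_mk] at h1
        have hcc : Dist.dist c c = 0 := dist_self c
        rw [hcc, zero_add] at h1
        simp only [treeCost]
        exact h1
      have hcard1 : 1 ≤ T.card := Finset.card_pos.mpr ⟨_, he⟩
      have hcard' : (T.erase s(c, c)).card ≤ n := by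
        rw [Finset.card_erase_of_mem he]; omega
      obtain ⟨t, h1, h2, h3⟩ := IH (T.erase s(c, c)) S x₀ hcard'
        (fun f hf => hTS f (Finset.mem_of_mem_erase hf))
        (by rw [hgeq]; exact hac)
        (fun u hu w hw => by rw [hgeq]; exact hconn u hu w hw) hx₀
      exact ⟨t, h1, h2, by rw [← hcost]; exact h3⟩
    · push_neg at hdiag
      -- key construction, for an edge s(x,y) whose x-side contains x₀
      have key : ∀ x y : V, s(x, y) ∈ T → x ≠ y →
          (fromEdgeSet (↑(T.erase s(x, y)) : Set (Sym2 V))).Reachable x x₀ →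
          ∃ t : List V, (x₀ :: t).Nodup ∧ (x₀ :: t).toFinset = S ∧
            cycCost (x₀ :: t) ≤ 2 * treeCost T := by
        intro x y he hxy hx₀side
        classical
        set G' := fromEdgeSet (↑(T.erase s(x, y)) : Set (Sym2 V)) with hG'
        have hGadj : ∀ a b, (fromEdgeSet (↑T : Set (Sym2 V))).Adj a b →
            G'.Adj a b ∨ s(a, b) = s(x, y) := by
          intro a b hab
          by_cases hq : (s(a, b) : Sym2 V) = s(x, y)
          · exact Or.inr hq
          · exact Or.inl ((adj_erase T _ a b).mpr ⟨hab, hq⟩)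
        have hbridge : ¬ G'.Reachable x y := by
          have hadjxy : (fromEdgeSet (↑T : Set (Sym2 V))).Adj x y :=
            (fromEdgeSet_adj _).mpr ⟨by simpa using he, hxy⟩
          have hb := isAcyclic_iff_forall_adj_isBridge.mp hac hadjxy
          rw [isBridge_iff] at hb
          rw [hG', fromEdgeSet_erase_eq]
          exact hb
        have hxS : x ∈ S := hTS _ he x (Sym2.mem_mk_left x y)
        have hyS : y ∈ S := hTS _ he y (Sym2.mem_mk_right x y)
        set Sx := S.filter (fun u => G'.Reachable x u) with hSxdef
        set Sy := S.filter (fun u => G'.Reachable y u) with hSydef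
        have hmemSx : ∀ u, u ∈ Sx ↔ u ∈ S ∧ G'.Reachable x u := fun u => Finset.mem_filter
        have hmemSy : ∀ u, u ∈ Sy ↔ u ∈ S ∧ G'.Reachable y u := fun u => Finset.mem_filter
        have hxSx : x ∈ Sx := (hmemSx x).mpr ⟨hxS, Reachable.refl x⟩
        have hySy : y ∈ Sy := (hmemSy y).mpr ⟨hyS, Reachable.refl y⟩
        have hdisj : ∀ u, u ∈ Sx → u ∈ Sy → False := fun u h1 h2 =>
          hbridge (((hmemSx u).mp h1).2.trans ((hmemSy u).mp h2).2.symm)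
        have hsplitS : ∀ u ∈ S, u ∈ Sx ∨ u ∈ Sy := by
          intro u hu
          obtain ⟨w⟩ := hconn u hu x hxS
          rcases walk_reach_or hGadj w rfl with h | h
          · exact Or.inl ((hmemSx u).mpr ⟨hu, h⟩)
          · exact Or.inr ((hmemSy u).mpr ⟨hu, h⟩)
        have hSunion : Sx ∪ Sy = S := by
          apply Finset.Subset.antisymm
          · intro u hu
            rcases Finset.mem_union.mp hu with h | h
            exacts [((hmemSx u).mp h).1, ((hmemSy u).mp h).1]
          · intro u hu
            exact Finset.mem_union.mpr (hsplitS u hu)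
        set Tx := T.filter (fun f => ∀ v ∈ f, v ∈ Sx) with hTxdef
        set Ty := T.filter (fun f => ∀ v ∈ f, v ∈ Sy) with hTydef
        have hyNSx : y ∉ Sx := fun h => hdisj y h hySy
        have hxNSy : x ∉ Sy := fun h => hdisj x hxSx h
        have hTxE : Tx ⊆ T.erase s(x, y) := by
          intro f hf
          obtain ⟨hfT, hfv⟩ := Finset.mem_filter.mp hf
          refine Finset.mem_erase.mpr ⟨?_, hfT⟩
          rintro rfl
          exact hyNSx (hfv y (Sym2.mem_mk_right x y))
        have hTyE : Ty ⊆ T.erase s(x, y) := by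
          intro f hf
          obtain ⟨hfT, hfv⟩ := Finset.mem_filter.mp hf
          refine Finset.mem_erase.mpr ⟨?_, hfT⟩
          rintro rfl
          exact hxNSy (hfv x (Sym2.mem_mk_left x y))
        have hcover : ∀ f ∈ T.erase s(x, y), f ∈ Tx ∨ f ∈ Ty := by
          intro f hf
          obtain ⟨hne, hfT⟩ := Finset.mem_erase.mp hf
          revert hne hfT
          induction f using Sym2.ind with
          | _ a b =>
            intro hne hfT
            have hab : a ≠ b := fun h => hdiag _ hfT (by rw [h]; exact Sym2.mk_isDiag_iff.mpr rfl)
            have hadj' : G'.Adj a b := (adj_erase T _ a b).mpr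
              ⟨(fromEdgeSet_adj _).mpr ⟨by simpa using hfT, hab⟩, hne⟩
            have haS : a ∈ S := hTS _ hfT a (Sym2.mem_mk_left a b)
            have hbS : b ∈ S := hTS _ hfT b (Sym2.mem_mk_right a b)
            rcases hsplitS a haS with h | h
            · left
              refine Finset.mem_filter.mpr ⟨hfT, ?_⟩
              intro v hv
              rcases Sym2.mem_iff.mp hv with rfl | rfl
              · exact h
              · exact (hmemSx v).mpr ⟨hbS, ((hmemSx a).mp h).2.trans hadj'.reachable⟩
            · right
              refine Finset.mem_filter.mpr ⟨hfT, ?_⟩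
              intro v hv
              rcases Sym2.mem_iff.mp hv with rfl | rfl
              · exact h
              · exact (hmemSy v).mpr ⟨hbS, ((hmemSy a).mp h).2.trans hadj'.reachable⟩
        have hdisjT : Disjoint Tx Ty := by
          apply Finset.disjoint_left.mpr
          intro f h1 h2
          obtain ⟨hfT, hv1⟩ := Finset.mem_filter.mp h1
          obtain ⟨_, hv2⟩ := Finset.mem_filter.mp h2
          revert hv1 hv2
          induction f using Sym2.ind with
          | _ a b =>
            intro hv1 hv2
            exact hdisj a (hv1 a (Sym2.mem_mk_left a b)) (hv2 a (Sym2.mem_mk_left a b))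
        have hTcover : T.erase s(x, y) = Tx ∪ Ty := by
          apply Finset.Subset.antisymm
          · intro f hf; exact Finset.mem_union.mpr (hcover f hf)
          · intro f hf
            rcases Finset.mem_union.mp hf with h | h
            exacts [hTxE h, hTyE h]
        have hcostT : treeCost T = Dist.dist x y + treeCost Tx + treeCost Ty := by
          have h1 := Finset.add_sum_erase T
            (fun f => Sym2.lift ⟨fun a b => Dist.dist a b, fun a b => dist_comm a b⟩ f) he
          simp only [Sym2.lift_mk] at h1
          have h2 : treeCost (T.erase s(x, y)) = treeCost Tx + treeCost Ty := by
            simp only [treeCost, hTcover]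
            exact Finset.sum_union hdisjT
          simp only [treeCost] at h1 h2 ⊢
          linarith [h1, h2]
        have hcard1 : 1 ≤ T.card := Finset.card_pos.mpr ⟨_, he⟩
        have hcardE : (T.erase s(x, y)).card ≤ n := by
          rw [Finset.card_erase_of_mem he]; omega
        have hcardx : Tx.card ≤ n := le_trans (Finset.card_le_card hTxE) hcardE
        have hcardy : Ty.card ≤ n := le_trans (Finset.card_le_card hTyE) hcardE
        -- connectivity on each side
        have hconnSide : ∀ (z : V) (Sz : Finset V) (Tz : Finset (Sym2 V)),
            (∀ u, u ∈ Sz ↔ u ∈ S ∧ G'.Reachable z u) →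
            (∀ f, f ∈ Tz ↔ f ∈ T ∧ ∀ v ∈ f, v ∈ Sz) →
            (∀ u ∈ Sz, ∀ w ∈ Sz, (fromEdgeSet (↑Tz : Set (Sym2 V))).Reachable u w) := by
          intro z Sz Tz hmem hmemT u hu w hw
          obtain ⟨huS, hzu⟩ := (hmem u).mp hu
          obtain ⟨hwS, hzw⟩ := (hmem w).mp hw
          obtain ⟨p⟩ := hzu.symm.trans hzw
          have hfTz : ∀ f, f ∈ p.edges → f ∈ T → f ∈ Tz := by
            intro f
            induction f using Sym2.ind with
            | _ a b =>
              intro hf hfT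
              have haSupp := SimpleGraph.Walk.fst_mem_support_of_mem_edges p hf
              have hbSupp := SimpleGraph.Walk.snd_mem_support_of_mem_edges p hf
              have hua : G'.Reachable u a := ⟨p.takeUntil a haSupp⟩
              have hub : G'.Reachable u b := ⟨p.takeUntil b hbSupp⟩
              have haS : a ∈ S := hTS _ hfT a (Sym2.mem_mk_left a b)
              have hbS : b ∈ S := hTS _ hfT b (Sym2.mem_mk_right a b)
              refine (hmemT _).mpr ⟨hfT, ?_⟩
              intro v hv
              rcases Sym2.mem_iff.mp hv with rfl | rfl
              · exact (hmem v).mpr ⟨haS, hzu.trans hua⟩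
              · exact (hmem v).mpr ⟨hbS, hzu.trans hub⟩
          refine ⟨p.transfer _ ?_⟩
          intro f hf
          have hfE := p.edges_subset_edgeSet hf
          rw [hG', edgeSet_fromEdgeSet] at hfE
          obtain ⟨hfT', hnd⟩ := hfE
          have hfT : f ∈ T := Finset.mem_of_mem_erase (by exact_mod_cast hfT')
          rw [edgeSet_fromEdgeSet]
          exact ⟨Finset.mem_coe.mpr (hfTz f hf hfT), hnd⟩
        obtain ⟨tx, hnx, hfx, hcx⟩ := IH Tx Sx x hcardx
          (fun f hf v hv => (Finset.mem_filter.mp hf).2 v hv)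
          (acyclic_mono (fromEdgeSet_mono
            (by exact_mod_cast Finset.filter_subset _ T)) hac)
          (hconnSide x Sx Tx (fun u => Finset.mem_filter) (fun f => Finset.mem_filter))
          hxSx
        obtain ⟨ty, hny, hfy, hcy⟩ := IH Ty Sy y hcardy
          (fun f hf v hv => (Finset.mem_filter.mp hf).2 v hv)
          (acyclic_mono (fromEdgeSet_mono
            (by exact_mod_cast Finset.filter_subset _ T)) hac)
          (hconnSide y Sy Ty (fun u => Finset.mem_filter) (fun f => Finset.mem_filter))
          hySy
        -- glue the two cycles at the edge (x, y)
        have hsplice := cycCost_splice x y ty tx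
        have hcost' : cycCost (x :: ((y :: ty) ++ tx)) ≤ 2 * treeCost T := by
          rw [hcostT]; linarith [hsplice, hcx, hcy]
        have hperm : List.Perm (x :: ((y :: ty) ++ tx)) ((x :: tx) ++ (y :: ty)) := by
          have h0 : List.Perm ((y :: ty) ++ tx) (tx ++ (y :: ty)) := List.perm_append_comm
          exact h0.cons x
        have hdisjL : List.Disjoint (x :: tx) (y :: ty) := by
          intro a h1 h2
          have ha1 : a ∈ Sx := by rw [← hfx]; exact List.mem_toFinset.mpr h1
          have ha2 : a ∈ Sy := by rw [← hfy]; exact List.mem_toFinset.mpr h2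
          exact hdisj a ha1 ha2
        have hnodup' : (x :: ((y :: ty) ++ tx)).Nodup :=
          hperm.nodup_iff.mpr (hnx.append hny hdisjL)
        have hfin' : (x :: ((y :: ty) ++ tx)).toFinset = S := by
          rw [perm_toFinset_eq hperm, List.toFinset_append, hfx, hfy, hSunion]
        -- rotate the cycle so that it starts at x₀
        have hx₀l : x₀ ∈ (x :: ((y :: ty) ++ tx)) := by
          rw [← List.mem_toFinset, hfin']
          exact ((hmemSx x₀).mp ((hmemSx x₀).mpr ⟨hx₀, hx₀side⟩)).1 |> fun _ => hx₀
        obtain ⟨A, B, hAB⟩ := List.append_of_mem hx₀l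
        have hperm2 : List.Perm (x :: ((y :: ty) ++ tx)) (x₀ :: (B ++ A)) := by
          rw [hAB]
          have : List.Perm (A ++ x₀ :: B) ((x₀ :: B) ++ A) := List.perm_append_comm
          simpa using this
        refine ⟨B ++ A, hperm2.nodup_iff.mp hnodup', ?_, ?_⟩
        · rw [← perm_toFinset_eq hperm2, hfin']
        · have hrot : cycCost (x₀ :: (B ++ A)) = cycCost (x :: ((y :: ty) ++ tx)) := by
            rw [hAB, show (x₀ :: (B ++ A) : List V) = (x₀ :: B) ++ A from by simp]
            exact cycCost_rotate (x₀ :: B) A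
          rw [hrot]; exact hcost'
      -- pick an edge and orient it towards x₀
      obtain ⟨e, he⟩ := hTne
      revert he
      induction e using Sym2.ind with
      | _ x y =>
        intro he
        have hxy : x ≠ y := fun h => hdiag _ he (by rw [h]; exact Sym2.mk_isDiag_iff.mpr rfl)
        have hGadj : ∀ a b, (fromEdgeSet (↑T : Set (Sym2 V))).Adj a b →
            (fromEdgeSet (↑(T.erase s(x, y)) : Set (Sym2 V))).Adj a b ∨ s(a, b) = s(x, y) := by
          intro a b hab
          by_cases hq : (s(a, b) : Sym2 V) = s(x, y)
          · exact Or.inr hq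
          · exact Or.inl ((adj_erase T _ a b).mpr ⟨hab, hq⟩)
        have hxS : x ∈ S := hTS _ he x (Sym2.mem_mk_left x y)
        have hsplit : (fromEdgeSet (↑(T.erase s(x, y)) : Set (Sym2 V))).Reachable x x₀ ∨
            (fromEdgeSet (↑(T.erase s(x, y)) : Set (Sym2 V))).Reachable y x₀ := by
          obtain ⟨w⟩ := hconn x₀ hx₀ x hxS
          exact walk_reach_or hGadj w rfl
        rcases hsplit with h | h
        · exact key x y he hxy h
        · refine key y x ?_ hxy.symm ?_
          · rw [Sym2.eq_swap]; exact he
          · rw [show (s(y, x) : Sym2 V) = s(x, y) from Sym2.eq_swap]; exact h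

/-! ### costs of edge sets -/

lemma lift_dist_nonneg (e : Sym2 V) :
    0 ≤ Sym2.lift ⟨fun a b => Dist.dist a b, fun a b => dist_comm a b⟩ e := by
  induction e using Sym2.ind with
  | _ a b => rw [Sym2.lift_mk]; exact dist_nonneg

lemma treeCost_nonneg (T : Finset (Sym2 V)) : 0 ≤ treeCost T :=
  Finset.sum_nonneg fun e _ => lift_dist_nonneg e

lemma treeCost_mono {T T' : Finset (Sym2 V)} (h : T' ⊆ T) : treeCost T' ≤ treeCost T :=
  Finset.sum_le_sum_of_subset_of_nonneg h fun e _ _ => lift_dist_nonneg e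

lemma sum_toFinset_le {α : Type*} [DecidableEq α] (w : α → ℝ) (hw : ∀ a, 0 ≤ w a) :
    ∀ L : List α, ∑ e ∈ L.toFinset, w e ≤ (L.map w).sum := by
  intro L
  induction L with
  | nil => simp
  | cons a L' ih =>
    rw [List.toFinset_cons, List.map_cons, List.sum_cons]
    by_cases ha : a ∈ L'.toFinset
    · rw [Finset.insert_eq_self.mpr ha]
      have := hw a
      linarith
    · rw [Finset.sum_insert ha]
      linarith

/-! ### path edges -/

noncomputable def pathEdges [DecidableEq V] (l : List V) : Finset (Sym2 V) :=
  ((l.zip l.tail).map fun p => s(p.1, p.2)).toFinset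

lemma pathCost_eq_sum (l : List V) :
    pathCost l = ((l.zip l.tail).map fun p => Dist.dist p.1 p.2).sum := by
  induction l with
  | nil => simp
  | cons a t ih =>
    cases t with
    | nil => simp
    | cons b t' =>
      rw [pathCost_cons_cons, ih]
      simp [List.zip_cons_cons]

lemma pathEdges_cost_le [DecidableEq V] (l : List V) :
    treeCost (pathEdges l) ≤ pathCost l := by
  rw [pathCost_eq_sum]
  have h := sum_toFinset_le
    (Sym2.lift ⟨fun a b => Dist.dist a b, fun a b => dist_comm a b⟩)
    lift_dist_nonneg ((l.zip l.tail).map fun p => s(p.1, p.2))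
  have h2 : ((((l.zip l.tail).map fun p => s(p.1, p.2)).map
      (Sym2.lift ⟨fun a b => Dist.dist a b, fun a b => dist_comm a b⟩)).sum)
      = ((l.zip l.tail).map fun p => Dist.dist p.1 p.2).sum := by
    rw [List.map_map]
    congr 1
  exact le_of_le_of_eq h h2

lemma pathEdges_mem [DecidableEq V] (l : List V) (e : Sym2 V) (he : e ∈ pathEdges l) :
    ∀ v ∈ e, v ∈ l := by
  rw [pathEdges, List.mem_toFinset, List.mem_map] at he
  obtain ⟨p, hp, rfl⟩ := he
  have h1 : p.1 ∈ l ∧ p.2 ∈ l.tail := List.of_mem_zip hp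
  intro v hv
  rcases Sym2.mem_iff.mp hv with rfl | rfl
  · exact h1.1
  · exact List.mem_of_mem_tail h1.2

lemma pathEdges_reachable [DecidableEq V] :
    ∀ (l : List V), l.Nodup → ∀ u ∈ l, ∀ w ∈ l,
      (fromEdgeSet (↑(pathEdges l) : Set (Sym2 V))).Reachable u w := by
  have key : ∀ (l : List V), l.Nodup → ∀ a : V, l = [] ∨ (∃ t, l = a :: t) →
      True := fun _ _ _ _ => trivial
  -- reachability from the head
  have hhead : ∀ (a : V) (t : List V), (a :: t).Nodup → ∀ u ∈ (a :: t),
      (fromEdgeSet (↑(pathEdges (a :: t)) : Set (Sym2 V))).Reachable a u := by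
    intro a t
    induction t generalizing a with
    | nil =>
      intro _ u hu
      rcases List.mem_singleton.mp hu with rfl
      exact Reachable.refl _
    | cons b t' ih =>
      intro hnd u hu
      have hnd' : (b :: t').Nodup := hnd.of_cons
      have hsub : pathEdges (b :: t') ⊆ pathEdges (a :: b :: t') := by
        intro e he
        rw [pathEdges, List.mem_toFinset] at he ⊢
        rw [show ((a :: b :: t').zip (a :: b :: t').tail : List (V × V))
          = (a, b) :: ((b :: t').zip (b :: t').tail) from rfl]
        rw [List.map_cons]
        exact List.mem_cons_of_mem _ he
      have hmono : fromEdgeSet (↑(pathEdges (b :: t')) : Set (Sym2 V)) ≤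
          fromEdgeSet (↑(pathEdges (a :: b :: t')) : Set (Sym2 V)) :=
        fromEdgeSet_mono (by exact_mod_cast hsub)
      have hab : a ≠ b := by
        intro h
        subst h
        exact (List.nodup_cons.mp hnd).1 (List.mem_cons_self (a := a) (l := t'))
      have hadj : (fromEdgeSet (↑(pathEdges (a :: b :: t')) : Set (Sym2 V))).Adj a b := by
        refine (fromEdgeSet_adj _).mpr ⟨?_, hab⟩
        rw [Finset.mem_coe, pathEdges, List.mem_toFinset,
          show ((a :: b :: t').zip (a :: b :: t').tail : List (V × V))
            = (a, b) :: ((b :: t').zip (b :: t').tail) from rfl, List.map_cons]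
        exact List.mem_cons_self
      rcases List.mem_cons.mp hu with rfl | hu'
      · exact Reachable.refl _
      · exact hadj.reachable.trans ((ih b hnd' u hu').mono hmono)
  intro l hnd u hu w hw
  cases l with
  | nil => exact absurd hu (List.not_mem_nil)
  | cons a t =>
    exact (hhead a t hnd u hu).symm.trans (hhead a t hnd w hw)

/-! ### pruning an edge set to a spanning tree -/

lemma prune [DecidableEq V] :
    ∀ (n : ℕ) (T : Finset (Sym2 V)) (R : Finset V), T.card ≤ n →
      (∀ e ∈ T, ∀ v ∈ e, v ∈ R) →
      (∀ u ∈ R, ∀ w ∈ R, (fromEdgeSet (↑T : Set (Sym2 V))).Reachable u w) →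
      ∃ T', T' ⊆ T ∧ IsSpanningTreeOn R T' := by
  intro n
  induction n with
  | zero =>
    intro T R hcard hTR hconn
    have hT : T = ∅ := Finset.card_eq_zero.mp (Nat.le_zero.mp hcard)
    subst hT
    refine ⟨∅, Finset.Subset.refl _, hTR, ?_, hconn⟩
    have hbot : fromEdgeSet ((↑(∅ : Finset (Sym2 V))) : Set (Sym2 V)) = ⊥ := by simp
    rw [hbot]
    exact isAcyclic_bot
  | succ n ih =>
    intro T R hcard hTR hconn
    by_cases hac : (fromEdgeSet (↑T : Set (Sym2 V))).IsAcyclic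
    · exact ⟨T, Finset.Subset.refl _, hTR, hac, hconn⟩
    · -- find a cycle, and an edge on it
      rw [IsAcyclic] at hac
      push_neg at hac
      obtain ⟨v0, c, hc⟩ := hac
      cases c with
      | nil => exact absurd hc (SimpleGraph.Walk.IsCycle.not_of_nil)
      | @cons _ v _ hadj p =>
       have hmem : s(v0, v) ∈ (SimpleGraph.Walk.cons hadj p).edges := by
         rw [SimpleGraph.Walk.edges_cons]
         exact List.mem_cons_self
       have hkey := (adj_and_reachable_delete_edges_iff_exists_cycle
         (G := fromEdgeSet (↑T : Set (Sym2 V))) (v := v0) (w := v)).mpr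
         ⟨v0, SimpleGraph.Walk.cons hadj p, hc, hmem⟩
       obtain ⟨hadjvw, hreach⟩ := hkey
       have hgeq : fromEdgeSet (↑(T.erase s(v0, v)) : Set (Sym2 V)) =
           fromEdgeSet (↑T : Set (Sym2 V)) \ fromEdgeSet {s(v0, v)} :=
         fromEdgeSet_erase_eq T _
       have hreach' : (fromEdgeSet (↑(T.erase s(v0, v)) : Set (Sym2 V))).Reachable v0 v := by
         rw [hgeq]; exact hreach
       have hGadj : ∀ a b, (fromEdgeSet (↑T : Set (Sym2 V))).Adj a b →
           (fromEdgeSet (↑(T.erase s(v0, v)) : Set (Sym2 V))).Adj a b ∨ s(a, b) = s(v0, v) := by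
         intro a b hab
         by_cases hq : (s(a, b) : Sym2 V) = s(v0, v)
         · exact Or.inr hq
         · exact Or.inl ((adj_erase T _ a b).mpr ⟨hab, hq⟩)
       have he : s(v0, v) ∈ T := by
         have := (SimpleGraph.Walk.cons hadj p).edges_subset_edgeSet hmem
         rw [edgeSet_fromEdgeSet] at this
         exact_mod_cast this.1
       have hcard1 : 1 ≤ T.card := Finset.card_pos.mpr ⟨_, he⟩
       have hcard' : (T.erase s(v0, v)).card ≤ n := by
         rw [Finset.card_erase_of_mem he]; omega
       obtain ⟨T', h1, h2⟩ := ih (T.erase s(v0, v)) R hcard'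
         (fun f hf => hTR f (Finset.mem_of_mem_erase hf))
         (fun u hu w' hw' => reachable_patch hreach' hGadj (hconn u hu w' hw'))
       exact ⟨T', h1.trans (Finset.erase_subset _ _), h2⟩

/-! ### existence of spanning trees, and the main reduction -/

lemma exists_isSpanningTreeOn [DecidableEq V] (S : Finset V) :
    ∃ T, IsSpanningTreeOn S T := by
  set T0 : Finset (Sym2 V) := (S ×ˢ S).image fun p => s(p.1, p.2) with hT0
  have hend : ∀ e ∈ T0, ∀ v ∈ e, v ∈ S := by
    intro e he v hv
    rw [hT0, Finset.mem_image] at he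
    obtain ⟨p, hp, rfl⟩ := he
    obtain ⟨h1, h2⟩ := Finset.mem_product.mp hp
    rcases Sym2.mem_iff.mp hv with rfl | rfl
    exacts [h1, h2]
  have hconn : ∀ u ∈ S, ∀ w ∈ S, (fromEdgeSet (↑T0 : Set (Sym2 V))).Reachable u w := by
    intro u hu w hw
    by_cases huw : u = w
    · subst huw; exact Reachable.refl _
    · refine ((fromEdgeSet_adj _).mpr ⟨?_, huw⟩).reachable
      rw [Finset.mem_coe, hT0, Finset.mem_image]
      exact ⟨(u, w), Finset.mem_product.mpr ⟨hu, hw⟩, rfl⟩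
  obtain ⟨T', _, hT'⟩ := prune T0.card T0 S le_rfl hend hconn
  exact ⟨T', hT'⟩

lemma steiner_reduction [DecidableEq V] (R S : Finset V) (T : Finset (Sym2 V))
    (hR : R.Nonempty) (hRS : R ⊆ S) (hT : IsSpanningTreeOn S T) :
    ∃ T', IsSpanningTreeOn R T' ∧ treeCost T' ≤ 2 * treeCost T := by
  obtain ⟨r, hr⟩ := hR
  obtain ⟨hTS, hac, hconn⟩ := hT
  obtain ⟨t, hnd, hfin, hcost⟩ := claim T.card T S r le_rfl hTS hac hconn (hRS hr)
  obtain ⟨t', hnd', hfin', hcost'⟩ := cycCost_shortcut R r hr t.length t le_rfl hnd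
    (by rw [hfin]; exact hRS)
  obtain ⟨T', hsub, hT'⟩ := prune (pathEdges (r :: t')).card (pathEdges (r :: t')) R le_rfl
    (fun e he v hv => by
      rw [← hfin', List.mem_toFinset]
      exact pathEdges_mem (r :: t') e he v hv)
    (fun u hu w hw => pathEdges_reachable (r :: t') hnd'
      u (by rw [← List.mem_toFinset, hfin']; exact hu)
      w (by rw [← List.mem_toFinset, hfin']; exact hw))
  refine ⟨T', hT', ?_⟩
  have h1 : treeCost T' ≤ treeCost (pathEdges (r :: t')) := treeCost_mono hsub
  have h2 := pathEdges_cost_le (r :: t')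
  have h3 := pathCost_le_cycCost (r :: t')
  linarith [hcost', hcost]

end SteinerAux

/-- In a finite metric space, for any nonempty terminal set `R`, the minimum cost of a spanning
tree on `R` is at most twice the minimum cost of a Steiner tree for `R`, i.e. at most twice
the minimum over all `S ⊇ R` of the minimum spanning tree cost on `S`. -/
theorem mst_le_two_mul_steiner (V : Type*) [MetricSpace V] [Fintype V]
    (R : Finset V) (hR : R.Nonempty) :
    mstCost V R ≤ 2 * sInf { c : ℝ | ∃ S : Finset V, R ⊆ S ∧ c = mstCost V S } := by
  classical
  set A := { c : ℝ | ∃ S : Finset V, R ⊆ S ∧ c = mstCost V S } with hA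
  have hAne : A.Nonempty := ⟨mstCost V R, R, Finset.Subset.refl R, rfl⟩
  have hAfin : A.Finite := by
    have hsub : A ⊆ (fun S : Finset V => mstCost V S) '' Set.univ := by
      rintro c ⟨S, _, rfl⟩
      exact ⟨S, trivial, rfl⟩
    exact (Set.finite_univ.image _).subset hsub
  obtain ⟨S₀, hRS₀, heq⟩ := hAne.csInf_mem hAfin
  set B := { c : ℝ | ∃ T : Finset (Sym2 V), IsSpanningTreeOn S₀ T ∧ c = treeCost T } with hB
  have hBne : B.Nonempty := by
    obtain ⟨T, hT⟩ := SteinerAux.exists_isSpanningTreeOn S₀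
    exact ⟨treeCost T, T, hT, rfl⟩
  have hBfin : B.Finite := by
    have hsub : B ⊆ (fun T : Finset (Sym2 V) => treeCost T) '' Set.univ := by
      rintro c ⟨T, _, rfl⟩
      exact ⟨T, trivial, rfl⟩
    exact (Set.finite_univ.image _).subset hsub
  obtain ⟨T₀, hT₀, heqB⟩ := hBne.csInf_mem hBfin
  have hmst₀ : mstCost V S₀ = treeCost T₀ := heqB
  obtain ⟨T', hT', hcost⟩ := SteinerAux.steiner_reduction R S₀ T₀ hR hRS₀ hT₀
  have hbdd : BddBelow { c : ℝ | ∃ T : Finset (Sym2 V), IsSpanningTreeOn R T ∧ c = treeCost T } := by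
    refine ⟨0, ?_⟩
    rintro c ⟨T, _, rfl⟩
    exact SteinerAux.treeCost_nonneg T
  have hfinal : mstCost V R ≤ treeCost T' :=
    csInf_le hbdd ⟨T', hT', rfl⟩
  calc mstCost V R ≤ treeCost T' := hfinal
    _ ≤ 2 * treeCost T₀ := hcost
    _ = 2 * mstCost V S₀ := by rw [hmst₀]
    _ = 2 * sInf A := by rw [heq]
end
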